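/- arXiv:2104.08745 — 8 statements merged into one kernel-verified Lean document; each statement's English description precedes it below -/
import Mathlib

section
/- Let E be a directed partially ordered vector space, F a monotone complete partially ordered vector space, and let (T_λ) be an increasing net of regular operators from E to F. Then (T_λ) is bounded above in the space of regular operators L^r(E,F) if and only if for every x in E⁺ the net (T_λ x) is bounded above in F; in that case the net has a supremum T in L^r(E,F) given pointwise on E⁺ by Tx = ⋁_λ T_λ x. -/
/-- A linear operator between partially ordered vector spaces is positive if it
maps the positive cone into the positive cone. -/
def IsPosOp {E F : Type*} [AddCommGroup E] [PartialOrder E] [Module ℝ E]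
    [AddCommGroup F] [PartialOrder F] [Module ℝ F] (T : E →ₗ[ℝ] F) : Prop :=
  ∀ x : E, 0 ≤ x → 0 ≤ T x

/-- A linear operator is regular if it is the difference of two positive operators. -/
def IsRegOp {E F : Type*} [AddCommGroup E] [PartialOrder E] [Module ℝ E]
    [AddCommGroup F] [PartialOrder F] [Module ℝ F] (T : E →ₗ[ℝ] F) : Prop :=
  ∃ P Q : E →ₗ[ℝ] F, IsPosOp P ∧ IsPosOp Q ∧ T = P - Q

/-- Let `E` be a directed partially ordered vector space, `F` a monotone complete
partially ordered vector space, and `(T_λ)` an increasing net of regular operators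
from `E` to `F`.  Then the net is bounded above in `L^r(E,F)` iff for every
`x ∈ E⁺` the net `(T_λ x)` is bounded above in `F`; in that case the net has a
supremum `T` in `L^r(E,F)`, given pointwise on `E⁺` by `T x = ⋁_λ T_λ x`. -/
theorem sup_of_increasing_net_of_regular_operators
    {E F : Type*} [AddCommGroup E] [PartialOrder E] [IsOrderedAddMonoid E] [Module ℝ E] [PosSMulStrictMono ℝ E] [PosSMulReflectLT ℝ E]
    [AddCommGroup F] [PartialOrder F] [IsOrderedAddMonoid F] [Module ℝ F] [PosSMulStrictMono ℝ F] [PosSMulReflectLT ℝ F]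
    (hdirE : ∀ x : E, ∃ y z : E, 0 ≤ y ∧ 0 ≤ z ∧ x = y - z)
    (hmcF : ∀ S : Set F, S.Nonempty → DirectedOn (· ≤ ·) S → BddAbove S → ∃ s, IsLUB S s)
    {Λ : Type*} [PartialOrder Λ] [Nonempty Λ]
    (hdirΛ : ∀ a b : Λ, ∃ c, a ≤ c ∧ b ≤ c)
    (T : Λ → E →ₗ[ℝ] F) (hreg : ∀ l, IsRegOp (T l))
    (hmono : ∀ l m : Λ, l ≤ m → ∀ x : E, 0 ≤ x → T l x ≤ T m x) :
    ((∃ S : E →ₗ[ℝ] F, IsRegOp S ∧ ∀ l, ∀ x : E, 0 ≤ x → T l x ≤ S x) ↔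
      ∀ x : E, 0 ≤ x → BddAbove (Set.range fun l => T l x)) ∧
    ((∀ x : E, 0 ≤ x → BddAbove (Set.range fun l => T l x)) →
      ∃ Tsup : E →ₗ[ℝ] F, IsRegOp Tsup ∧
        (∀ l, ∀ x : E, 0 ≤ x → T l x ≤ Tsup x) ∧
        (∀ S : E →ₗ[ℝ] F, IsRegOp S → (∀ l, ∀ x : E, 0 ≤ x → T l x ≤ S x) →
          ∀ x : E, 0 ≤ x → Tsup x ≤ S x) ∧
        (∀ x : E, 0 ≤ x → IsLUB (Set.range fun l => T l x) (Tsup x))) := by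
  classical
  have main : (∀ x : E, 0 ≤ x → BddAbove (Set.range fun l => T l x)) →
      ∃ Tsup : E →ₗ[ℝ] F, IsRegOp Tsup ∧
        (∀ l, ∀ x : E, 0 ≤ x → T l x ≤ Tsup x) ∧
        (∀ S : E →ₗ[ℝ] F, IsRegOp S → (∀ l, ∀ x : E, 0 ≤ x → T l x ≤ S x) →
          ∀ x : E, 0 ≤ x → Tsup x ≤ S x) ∧
        (∀ x : E, 0 ≤ x → IsLUB (Set.range fun l => T l x) (Tsup x)) := by
    intro hbdd
    have hdirected : ∀ x : E, 0 ≤ x → DirectedOn (· ≤ ·) (Set.range fun l => T l x) := by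
      intro x hx
      rintro _ ⟨l, rfl⟩ _ ⟨m, rfl⟩
      obtain ⟨c, hlc, hmc⟩ := hdirΛ l m
      exact ⟨T c x, ⟨c, rfl⟩, hmono l c hlc x hx, hmono m c hmc x hx⟩
    have key : ∀ x : E, 0 ≤ x → ∃ s, IsLUB (Set.range fun l => T l x) s :=
      fun x hx => hmcF _ (Set.range_nonempty _) (hdirected x hx) (hbdd x hx)
    choose! g hg using key
    have g0 : g 0 = 0 := by
      refine (hg 0 le_rfl).unique ?_
      constructor
      · rintro _ ⟨l, rfl⟩; simp
      · intro u hu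
        obtain ⟨l⟩ := ‹Nonempty Λ›
        have := hu ⟨l, rfl⟩
        simpa using this
    have gadd : ∀ x y : E, 0 ≤ x → 0 ≤ y → g (x + y) = g x + g y := by
      intro x y hx hy
      refine (hg (x + y) (add_nonneg hx hy)).unique ?_
      constructor
      · rintro _ ⟨l, rfl⟩
        show T l (x + y) ≤ g x + g y
        rw [map_add]
        exact add_le_add ((hg x hx).1 ⟨l, rfl⟩) ((hg y hy).1 ⟨l, rfl⟩)
      · intro u hu
        have h1 : ∀ m : Λ, T m y ≤ u - g x := by
          intro m
          have h2 : g x ≤ u - T m y := by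
            apply (hg x hx).2
            rintro _ ⟨l, rfl⟩
            obtain ⟨c, hlc, hmc⟩ := hdirΛ l m
            have hsum : T l x + T m y ≤ T c (x + y) := by
              rw [map_add]
              exact add_le_add (hmono l c hlc x hx) (hmono m c hmc y hy)
            exact le_sub_iff_add_le.mpr (hsum.trans (hu ⟨c, rfl⟩))
          have := le_sub_iff_add_le.mp h2
          rw [add_comm] at this
          exact le_sub_iff_add_le.mpr this
        have hgy : g y ≤ u - g x := (hg y hy).2 (by rintro _ ⟨m, rfl⟩; exact h1 m)
        have := le_sub_iff_add_le.mp hgy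
        rw [add_comm] at this
        exact this
    have gsmul : ∀ c : ℝ, 0 ≤ c → ∀ x : E, 0 ≤ x → g (c • x) = c • g x := by
      intro c hc x hx
      rcases hc.eq_or_lt with rfl | hc
      · simp [g0]
      · refine (hg (c • x) (smul_nonneg hc.le hx)).unique ?_
        constructor
        · rintro _ ⟨l, rfl⟩
          show T l (c • x) ≤ c • g x
          rw [map_smul]
          exact smul_le_smul_of_nonneg_left ((hg x hx).1 ⟨l, rfl⟩) hc.le
        · intro u hu
          have hgx : g x ≤ c⁻¹ • u := by
            apply (hg x hx).2
            rintro _ ⟨l, rfl⟩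
            show T l x ≤ c⁻¹ • u
            rw [le_inv_smul_iff_of_pos hc]
            have : T l (c • x) ≤ u := hu ⟨l, rfl⟩
            rwa [map_smul] at this
          calc c • g x ≤ c • (c⁻¹ • u) := smul_le_smul_of_nonneg_left hgx hc.le
            _ = u := smul_inv_smul₀ hc.ne' u
    choose p q h1 h2 h3 using hdirE
    have Tval : ∀ (x y z : E), 0 ≤ y → 0 ≤ z → x = y - z →
        g (p x) - g (q x) = g y - g z := by
      intro x y z hy hz hxyz
      have hadd : p x + z = y + q x := by
        have := (h3 x).symm.trans hxyz
        rw [sub_eq_sub_iff_add_eq_add] at this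
        exact this
      have : g (p x) + g z = g y + g (q x) := by
        rw [← gadd _ _ (h1 x) hz, ← gadd _ _ hy (h2 x), hadd]
      rw [sub_eq_sub_iff_add_eq_add]
      exact this
    have hadd' : ∀ x y : E,
        g (p (x + y)) - g (q (x + y)) = (g (p x) - g (q x)) + (g (p y) - g (q y)) := by
      intro x y
      have hd : x + y = (p x + p y) - (q x + q y) := by
        conv_lhs => rw [h3 x, h3 y]
        abel
      rw [Tval (x + y) _ _ (add_nonneg (h1 x) (h1 y)) (add_nonneg (h2 x) (h2 y)) hd,
        gadd _ _ (h1 x) (h1 y), gadd _ _ (h2 x) (h2 y)]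
      abel
    have hsmul' : ∀ (c : ℝ) (x : E),
        g (p (c • x)) - g (q (c • x)) = c • (g (p x) - g (q x)) := by
      intro c x
      rcases le_or_gt 0 c with hc | hc
      · have hd : c • x = c • p x - c • q x := by rw [← smul_sub, ← h3 x]
        rw [Tval (c • x) _ _ (smul_nonneg hc (h1 x)) (smul_nonneg hc (h2 x)) hd,
          gsmul c hc _ (h1 x), gsmul c hc _ (h2 x), smul_sub]
      · have hc' : 0 ≤ -c := by linarith
        have hd : c • x = (-c) • q x - (-c) • p x := by
          conv_lhs => rw [h3 x]
          module
        rw [Tval (c • x) _ _ (smul_nonneg hc' (h2 x)) (smul_nonneg hc' (h1 x)) hd,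
          gsmul _ hc' _ (h2 x), gsmul _ hc' _ (h1 x)]
        module
    let Tsup : E →ₗ[ℝ] F :=
      { toFun := fun x => g (p x) - g (q x)
        map_add' := hadd'
        map_smul' := hsmul' }
    have hTval : ∀ x : E, 0 ≤ x → Tsup x = g x := by
      intro x hx
      show g (p x) - g (q x) = g x
      rw [Tval x x 0 hx le_rfl (sub_zero x).symm, g0, sub_zero]
    have hub : ∀ l, ∀ x : E, 0 ≤ x → T l x ≤ Tsup x := by
      intro l x hx
      rw [hTval x hx]
      exact (hg x hx).1 ⟨l, rfl⟩
    obtain ⟨l0⟩ := ‹Nonempty Λ›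
    obtain ⟨P, Q, hP, hQ, hPQ⟩ := hreg l0
    refine ⟨Tsup, ⟨Tsup - T l0 + P, Q, ?_, hQ, by rw [hPQ]; abel⟩, hub, ?_, ?_⟩
    · intro x hx
      simp only [LinearMap.add_apply, LinearMap.sub_apply]
      have h4 := hub l0 x hx
      have h5 := hP x hx
      have := add_le_add (sub_nonneg.mpr h4) h5
      simpa using this
    · intro S _ hS x hx
      rw [hTval x hx]
      exact (hg x hx).2 (by rintro _ ⟨l, rfl⟩; exact hS l x hx)
    · intro x hx
      rw [hTval x hx]
      exact hg x hx
  refine ⟨⟨?_, fun hbdd => ?_⟩, main⟩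
  · rintro ⟨S, _, hS⟩ x hx
    exact ⟨S x, by rintro _ ⟨l, rfl⟩; exact hS l x hx⟩
  · obtain ⟨Tsup, hr, hu, -, -⟩ := main hbdd
    exact ⟨Tsup, hr, hu⟩
end

section
/- Let H be a complex Hilbert space and L a strongly closed complex linear subspace of B(H). Then the real vector space L_sa of self-adjoint elements of L, with the order inherited from B(H)_sa, is monotone complete: every increasing net in L_sa bounded above in L_sa converges in the strong operator topology to an element of L_sa which equals its supremum in L_sa. -/
open ContinuousLinearMap Filter RCLike Topology

local notation "⟪" x ", " y "⟫" => @inner ℂ _ _ x y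

section Aux

set_option linter.unusedSectionVars false

variable {H : Type} [NormedAddCommGroup H] [InnerProductSpace ℂ H] [CompleteSpace H]

private lemma re_inner_sub' (A B : H →L[ℂ] H) (x : H) :
    re ⟪(A - B) x, x⟫ = re ⟪A x, x⟫ - re ⟪B x, x⟫ := by
  simp [ContinuousLinearMap.sub_apply, inner_sub_left]

private lemma pos_norm_le' {A C : H →L[ℂ] H} (hA : A.IsPositive) (hCA : (C - A).IsPositive) :
    ‖A‖ ≤ ‖C‖ :=
  CStarAlgebra.norm_le_norm_of_nonneg_of_le ((nonneg_iff_isPositive A).mpr hA)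
    ((le_def A C).mpr hCA)

private lemma pos_norm_sq' {P : H →L[ℂ] H} (hP : P.IsPositive) (x : H) :
    ‖P x‖ ^ 2 ≤ ‖P‖ * re ⟪P x, x⟫ := by
  have hc : 0 ≤ re ⟪P x, x⟫ := hP.2 x
  by_cases hPx : ‖P x‖ = 0
  · rw [hPx]
    simpa using mul_nonneg (norm_nonneg P) hc
  have hsym := hP.1
  have key : ∀ t : ℝ, 0 ≤ re ⟪P (P x), P x⟫ * (t * t)
      + (2 * ‖P x‖ ^ 2) * t + re ⟪P x, x⟫ := by
    intro t
    have h0 := hP.2 (x + (t : ℂ) • P x)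
    have hexp : reApplyInnerSelf P (x + (t : ℂ) • P x)
        = re ⟪P (P x), P x⟫ * (t * t) + (2 * ‖P x‖ ^ 2) * t + re ⟪P x, x⟫ := by
      rw [reApplyInnerSelf]
      rw [map_add, map_smul, inner_add_left, inner_add_right, inner_add_right,
        inner_smul_left, inner_smul_right, inner_smul_left, inner_smul_right]
      have h1 : (⟪P (P x), x⟫ : ℂ) = ⟪P x, P x⟫ := hsym (P x) x
      have hret : ∀ (s : ℝ) (z : ℂ), re ((s : ℂ) * z) = s * re z := fun s z => by
        simp [Complex.mul_re]
      rw [h1]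
      simp only [Complex.conj_ofReal, map_add, hret, inner_self_eq_norm_sq (𝕜 := ℂ)]
      ring
    rw [hexp] at h0
    exact h0
  have hd := discrim_le_zero key
  rw [discrim] at hd
  have hA : re ⟪P (P x), P x⟫ ≤ ‖P‖ * ‖P x‖ ^ 2 := by
    calc re ⟪P (P x), P x⟫ ≤ ‖(⟪P (P x), P x⟫ : ℂ)‖ := re_le_norm _
      _ ≤ ‖P (P x)‖ * ‖P x‖ := norm_inner_le_norm _ _
      _ ≤ (‖P‖ * ‖P x‖) * ‖P x‖ := by gcongr; exact P.le_opNorm _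
      _ = ‖P‖ * ‖P x‖ ^ 2 := by ring
  have hpos : 0 < ‖P x‖ := lt_of_le_of_ne (norm_nonneg _) (Ne.symm hPx)
  have hsq : 0 < ‖P x‖ ^ 2 := pow_pos hpos 2
  have h4 : ‖P x‖ ^ 2 * ‖P x‖ ^ 2 ≤ (‖P‖ * re ⟪P x, x⟫) * ‖P x‖ ^ 2 := by
    nlinarith [mul_le_mul_of_nonneg_right hA hc]
  exact le_of_mul_le_mul_right h4 hsq

end Aux

/-- Let `H` be a complex Hilbert space and `L` a strongly closed complex linear
subspace of `B(H)`.  Then the self-adjoint part `L_sa` of `L` is monotone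
complete: every increasing net in `L_sa` bounded above in `L_sa` converges in
the strong operator topology to an element of `L_sa`, which is its supremum in
`L_sa`. -/
theorem strongly_closed_subspace_sa_monotone_complete
    {H : Type} [NormedAddCommGroup H] [InnerProductSpace ℂ H] [CompleteSpace H]
    (L : Submodule ℂ (H →L[ℂ] H))
    (hL : ∀ (ι : Type) [Preorder ι], ∀ (T : ι → H →L[ℂ] H) (T' : H →L[ℂ] H),
      (∀ i, T i ∈ L) →
      (∀ x : H, Filter.Tendsto (fun i => T i x) Filter.atTop (nhds (T' x))) → T' ∈ L)
    {Λ : Type} [PartialOrder Λ] [Nonempty Λ] (hdir : ∀ a b : Λ, ∃ c, a ≤ c ∧ b ≤ c)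
    (T : Λ → H →L[ℂ] H) (hmem : ∀ l, T l ∈ L) (hsa : ∀ l, IsSelfAdjoint (T l))
    (hmono : ∀ l m : Λ, l ≤ m → (T m - T l).IsPositive)
    (B : H →L[ℂ] H) (hB : B ∈ L) (hBsa : IsSelfAdjoint B)
    (hbd : ∀ l, (B - T l).IsPositive) :
    ∃ T' : H →L[ℂ] H, T' ∈ L ∧ IsSelfAdjoint T' ∧
      (∀ x : H, Filter.Tendsto (fun l => T l x) Filter.atTop (nhds (T' x))) ∧
      (∀ l, (T' - T l).IsPositive) ∧
      (∀ S : H →L[ℂ] H, S ∈ L → IsSelfAdjoint S →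
        (∀ l, (S - T l).IsPositive) → (S - T').IsPositive) := by
    classical
  haveI : IsDirected Λ (· ≤ ·) := ⟨hdir⟩
  haveI : (Filter.atTop : Filter Λ).NeBot :=
    Filter.atTop_neBot_iff.mpr ⟨‹Nonempty Λ›, ‹IsDirected Λ (· ≤ ·)›⟩
  obtain ⟨b⟩ := ‹Nonempty Λ›
  set C : ℝ := ‖B - T b‖ with hCdef
  have hC0 : 0 ≤ C := norm_nonneg _
  set f : Λ → H → ℝ := fun l x => re ⟪T l x, x⟫ with hfdef
  -- monotonicity of f
  have hfmono : ∀ x : H, Monotone fun l => f l x := by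
    intro x l m hlm
    have h := (hmono l m hlm).2 x
    rw [reApplyInnerSelf, re_inner_sub'] at h
    simpa [hfdef] using sub_nonneg.mp h
  have hbdd : ∀ x : H, BddAbove (Set.range fun l => f l x) := by
    intro x
    refine ⟨re ⟪B x, x⟫, ?_⟩
    rintro y ⟨l, rfl⟩
    have h := (hbd l).2 x
    rw [reApplyInnerSelf, re_inner_sub'] at h
    simpa [hfdef] using sub_nonneg.mp h
  have hstend : ∀ x : H, Filter.Tendsto (fun l => f l x) Filter.atTop (𝓝 (⨆ l, f l x)) :=
    fun x => tendsto_atTop_ciSup (hfmono x) (hbdd x)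
  -- uniform norm bound on differences above b
  have hnorm : ∀ {l m : Λ}, b ≤ l → l ≤ m → ‖T m - T l‖ ≤ C := by
    intro l m hbl hlm
    refine pos_norm_le' (hmono l m hlm) ?_
    have heq : (B - T b) - (T m - T l) = (B - T m) + (T l - T b) := by abel
    rw [heq]
    exact (hbd m).add (hmono b l hbl)
  -- the net (T l x) is Cauchy
  have hcauchy : ∀ x : H, Cauchy (Filter.map (fun l => T l x) Filter.atTop) := by
    intro x
    rw [Metric.cauchy_iff]
    refine ⟨Filter.map_neBot, fun ε hε => ?_⟩
    set s : ℝ := ⨆ l, f l x with hsdef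
    set δ : ℝ := ε ^ 2 / (8 * (C + 1)) with hδdef
    have hδpos : 0 < δ := by positivity
    obtain ⟨l₁, hl₁⟩ := exists_lt_of_lt_ciSup (show s - δ < s by linarith)
    obtain ⟨l₀, hbl₀, hl₁l₀⟩ := hdir b l₁
    have hl₀ : s - δ < f l₀ x := lt_of_lt_of_le hl₁ (hfmono x hl₁l₀)
    refine ⟨(fun l => T l x) '' {l | l₀ ≤ l},
      Filter.image_mem_map (Filter.mem_atTop l₀), ?_⟩
    have key : ∀ {p q : Λ}, l₀ ≤ p → p ≤ q → dist (T q x) (T p x) < ε / 2 := by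
      intro p q hp hpq
      have h1 : ‖(T q - T p) x‖ ^ 2 ≤ ‖T q - T p‖ * (f q x - f p x) := by
        have h := pos_norm_sq' (hmono p q hpq) x
        rwa [re_inner_sub'] at h
      have h2 : f q x - f p x < δ := by
        have hq : f q x ≤ s := le_ciSup (hbdd x) q
        have hpge : s - δ < f p x := lt_of_lt_of_le hl₀ (hfmono x hp)
        linarith
      have h3 : 0 ≤ f q x - f p x := sub_nonneg.mpr (hfmono x hpq)
      have h4 : ‖T q - T p‖ ≤ C + 1 := le_trans (hnorm (le_trans hbl₀ hp) hpq) (by linarith)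
      have h5 : ‖(T q - T p) x‖ ^ 2 < (C + 1) * δ := by
        calc ‖(T q - T p) x‖ ^ 2 ≤ ‖T q - T p‖ * (f q x - f p x) := h1
          _ ≤ (C + 1) * (f q x - f p x) := by
              exact mul_le_mul_of_nonneg_right h4 h3
          _ < (C + 1) * δ := by
              exact mul_lt_mul_of_pos_left h2 (by linarith)
      have h6 : (C + 1) * δ = ε ^ 2 / 8 := by
        rw [hδdef]; field_simp
      have h7 : ‖(T q - T p) x‖ ^ 2 < (ε / 2) ^ 2 := by
        rw [h6] at h5; nlinarith
      have h8 : ‖(T q - T p) x‖ < ε / 2 :=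
        lt_of_pow_lt_pow_left₀ 2 (by linarith) h7
      rw [dist_eq_norm]
      simpa [ContinuousLinearMap.sub_apply] using h8
    rintro _ ⟨l, hl, rfl⟩ _ ⟨m, hm, rfl⟩
    obtain ⟨n, hln, hmn⟩ := hdir l m
    calc dist (T l x) (T m x) ≤ dist (T l x) (T n x) + dist (T n x) (T m x) :=
          dist_triangle _ _ _
      _ < ε / 2 + ε / 2 := by
          have ha := key hl hln
          have hb := key hm hmn
          rw [dist_comm] at ha
          linarith
      _ = ε := by ring
  have hlim : ∀ x : H, ∃ y : H, Filter.Tendsto (fun l => T l x) Filter.atTop (𝓝 y) :=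
    fun x => CompleteSpace.complete (hcauchy x)
  choose g hg using hlim
  -- uniform bound for continuity
  have hM : ∀ l, b ≤ l → ‖T l‖ ≤ ‖T b‖ + C := by
    intro l hbl
    calc ‖T l‖ = ‖T b + (T l - T b)‖ := by rw [add_sub_cancel]
      _ ≤ ‖T b‖ + ‖T l - T b‖ := norm_add_le _ _
      _ ≤ ‖T b‖ + C := by
          have := hnorm (le_refl b) hbl
          linarith
  have hgbound : ∀ x, ‖g x‖ ≤ (‖T b‖ + C) * ‖x‖ := by
    intro x
    have hn : Filter.Tendsto (fun l => ‖T l x‖) Filter.atTop (𝓝 ‖g x‖) := (hg x).norm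
    refine le_of_tendsto hn ?_
    filter_upwards [Filter.mem_atTop b] with l hl
    calc ‖T l x‖ ≤ ‖T l‖ * ‖x‖ := (T l).le_opNorm x
      _ ≤ (‖T b‖ + C) * ‖x‖ := mul_le_mul_of_nonneg_right (hM l hl) (norm_nonneg x)
  let T'lin : H →ₗ[ℂ] H :=
    { toFun := g
      map_add' := fun x y => by
        have h1 := hg (x + y)
        have h2 := (hg x).add (hg y)
        simp only [map_add] at h1
        exact tendsto_nhds_unique h1 h2
      map_smul' := fun c x => by
        have h1 := hg (c • x)
        have h2 := (hg x).const_smul c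
        simp only [map_smul] at h1
        exact tendsto_nhds_unique h1 h2 }
  let T' : H →L[ℂ] H := LinearMap.mkContinuous T'lin (‖T b‖ + C) hgbound
  have hT'apply : ∀ x, T' x = g x := fun x => rfl
  have hT'tend : ∀ x : H, Filter.Tendsto (fun l => T l x) Filter.atTop (𝓝 (T' x)) := by
    intro x; rw [hT'apply]; exact hg x
  -- membership
  have hT'mem : T' ∈ L := hL Λ T T' hmem hT'tend
  -- selfadjoint
  have hsym : ∀ x y : H, (⟪T' x, y⟫ : ℂ) = ⟪x, T' y⟫ := by
    intro x y
    have h1 : Filter.Tendsto (fun l => (⟪T l x, y⟫ : ℂ)) Filter.atTop (𝓝 ⟪T' x, y⟫) :=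
      (hT'tend x).inner tendsto_const_nhds
    have h2 : Filter.Tendsto (fun l => (⟪x, T l y⟫ : ℂ)) Filter.atTop (𝓝 ⟪x, T' y⟫) :=
      tendsto_const_nhds.inner (hT'tend y)
    have heq : (fun l => (⟪T l x, y⟫ : ℂ)) = fun l => (⟪x, T l y⟫ : ℂ) :=
      funext fun l => (isSelfAdjoint_iff_isSymmetric.mp (hsa l)) x y
    rw [heq] at h1
    exact tendsto_nhds_unique h1 h2
  have hT'sa : IsSelfAdjoint T' := isSelfAdjoint_iff_isSymmetric.mpr fun x y => hsym x y
  -- identify the quadratic form of T' with the sup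
  have hres : ∀ x : H, re ⟪T' x, x⟫ = ⨆ l, f l x := by
    intro x
    have h1 : Filter.Tendsto (fun l => f l x) Filter.atTop (𝓝 (re ⟪T' x, x⟫)) :=
      (RCLike.continuous_re.tendsto _).comp ((hT'tend x).inner tendsto_const_nhds)
    exact tendsto_nhds_unique h1 (hstend x)
  refine ⟨T', hT'mem, hT'sa, hT'tend, ?_, ?_⟩
  · intro l
    refine ⟨isSelfAdjoint_iff_isSymmetric.mp (hT'sa.sub (hsa l)), fun x => ?_⟩
    rw [reApplyInnerSelf, re_inner_sub', hres x]
    have : f l x ≤ ⨆ m, f m x := le_ciSup (hbdd x) l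
    linarith
  · intro S hSL hSsa hS
    refine ⟨isSelfAdjoint_iff_isSymmetric.mp (hSsa.sub hT'sa), fun x => ?_⟩
    rw [reApplyInnerSelf, re_inner_sub', hres x]
    have h1 : (⨆ l, f l x) ≤ re ⟪S x, x⟫ := by
      refine ciSup_le fun l => ?_
      have h := (hS l).2 x
      rw [reApplyInnerSelf, re_inner_sub'] at h
      linarith
    linarith
end

section
/- Let E be a normal partially ordered vector space, (x_λ) a decreasing net in E, and x ∈ E. Then x_λ ↓ x (i.e., x is the infimum of the net) if and only if ⟨x, x′⟩ = inf_λ ⟨x_λ, x′⟩ for every positive order continuous functional x′ on E. -/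
/-- A linear functional on a partially ordered vector space is a positive order
continuous functional if it is positive and maps decreasing nets with infimum `0`
to nets of reals with infimum `0`. -/
def PosOrdCont {E : Type*} [AddCommGroup E] [PartialOrder E] [Module ℝ E]
    (f : E →ₗ[ℝ] ℝ) : Prop :=
  (∀ x : E, 0 ≤ x → 0 ≤ f x) ∧
  ∀ (ι : Type) [Preorder ι] [Nonempty ι], (∀ a b : ι, ∃ c, a ≤ c ∧ b ≤ c) →
    ∀ x : ι → E, (∀ i j, i ≤ j → x j ≤ x i) → IsGLB (Set.range x) 0 →
      IsGLB (Set.range fun i => f (x i)) 0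

/-- In a normal partially ordered vector space, a decreasing net `(x_λ)` has
infimum `x` iff `⟨x, x′⟩ = inf_λ ⟨x_λ, x′⟩` for every positive order continuous
functional `x′`. -/
theorem isGLB_iff_posOrdCont_of_normal
    {E : Type*} [AddCommGroup E] [PartialOrder E] [IsOrderedAddMonoid E] [Module ℝ E] [PosSMulStrictMono ℝ E] [PosSMulReflectLT ℝ E]
    (hnormal : ∀ x : E, 0 ≤ x ↔ ∀ f : E →ₗ[ℝ] ℝ, PosOrdCont f → 0 ≤ f x)
    {Λ : Type} [PartialOrder Λ] [Nonempty Λ] (hdir : ∀ a b : Λ, ∃ c, a ≤ c ∧ b ≤ c)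
    (x : Λ → E) (hdec : ∀ l m : Λ, l ≤ m → x m ≤ x l) (x₀ : E) :
    IsGLB (Set.range x) x₀ ↔
      ∀ f : E →ₗ[ℝ] ℝ, PosOrdCont f → IsGLB (Set.range fun l => f (x l)) (f x₀) := by
  constructor
  · intro h f hf
    have h0 : IsGLB (Set.range fun l => x l - x₀) (0 : E) := by
      constructor
      · rintro _ ⟨l, rfl⟩
        exact sub_nonneg.mpr (h.1 ⟨l, rfl⟩)
      · intro b hb
        have hb' : ∀ l, b + x₀ ≤ x l := fun l =>
          le_sub_iff_add_le.mp (hb ⟨l, rfl⟩)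
        have : b + x₀ ≤ x₀ := h.2 (by rintro _ ⟨l, rfl⟩; exact hb' l)
        exact add_le_iff_nonpos_left.mp this
    have h1 := hf.2 Λ hdir _ (fun i j hij => sub_le_sub_right (hdec i j hij) x₀) h0
    simp only [map_sub] at h1
    constructor
    · rintro _ ⟨l, rfl⟩
      have := h1.1 ⟨l, rfl⟩
      dsimp only at this ⊢
      linarith
    · intro b hb
      have : b - f x₀ ≤ 0 := h1.2 (by
        rintro _ ⟨l, rfl⟩
        have := hb ⟨l, rfl⟩
        dsimp only at this ⊢
        linarith)
      linarith
  · intro h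
    constructor
    · rintro _ ⟨l, rfl⟩
      rw [← sub_nonneg, hnormal]
      intro f hf
      rw [map_sub, sub_nonneg]
      exact (h f hf).1 ⟨l, rfl⟩
    · intro b hb
      rw [← sub_nonneg, hnormal]
      intro f hf
      rw [map_sub, sub_nonneg]
      exact (h f hf).2 (by
        rintro _ ⟨l, rfl⟩
        have : (0 : ℝ) ≤ f (x l - b) := hf.1 _ (sub_nonneg.mpr (hb ⟨l, rfl⟩))
        rw [map_sub, sub_nonneg] at this
        exact this)
end

section
/- Let H be a complex Hilbert space, L a strongly closed complex linear subspace of B(H), μ : Ω → (L_sa)⁺ a map on a measurable space (X, Ω) with μ(∅) = 0, and (Δ_n) a sequence of measurable sets with union in Ω. Then μ(⋃_n Δ_n) = ⋁_{N≥1} ∑_{n=1}^N μ(Δ_n) in L_sa (order σ-additivity) if and only if μ(⋃_n Δ_n)x = ∑_{n=1}^∞ μ(Δ_n)x in the norm of H for every x ∈ H (strong σ-additivity). -/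
open RCLike ContinuousLinearMap Filter
open scoped ComplexInnerProductSpace

section Helpers

variable {H : Type} [NormedAddCommGroup H] [InnerProductSpace ℂ H] [CompleteSpace H]

private lemma key_cs {B : H →L[ℂ] H} (hB : B.IsPositive) (x y : H) :
    (re ⟪B x, y⟫)^2 ≤ re ⟪B x, x⟫ * re ⟪B y, y⟫ := by
  have hsym := ContinuousLinearMap.isSelfAdjoint_iff_isSymmetric.mp hB.isSelfAdjoint
  have h : ∀ t : ℝ, 0 ≤ (re ⟪B y, y⟫) * (t*t) + (2 * re ⟪B x, y⟫) * t + re ⟪B x, x⟫ := by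
    intro t
    have h0 := hB.2 (x + (t:ℂ) • y)
    have hyx : re ⟪B y, x⟫ = re ⟪B x, y⟫ := by
      have h1 := hsym y x
      simp only [ContinuousLinearMap.coe_coe] at h1
      rw [h1, inner_re_symm]
    rw [ContinuousLinearMap.reApplyInnerSelf_apply] at h0
    simp only [map_add, map_smul, inner_add_left, inner_add_right, inner_smul_left,
      inner_smul_right, Complex.conj_ofReal, _root_.map_add, RCLike.re_ofReal_mul,
      RCLike.re_to_complex, Complex.add_re, Complex.re_ofReal_mul] at h0
    simp only [RCLike.re_to_complex] at hyx ⊢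
    rw [hyx] at h0
    linarith [h0]
  have hd := discrim_le_zero h
  rw [discrim] at hd
  nlinarith [hd]

private lemma re_inner_le_opNorm (A : H →L[ℂ] H) (z : H) :
    re ⟪A z, z⟫ ≤ ‖A‖ * ‖z‖^2 := by
  calc re ⟪A z, z⟫ ≤ ‖(⟪A z, z⟫ : ℂ)‖ := RCLike.re_le_norm _
    _ ≤ ‖A z‖ * ‖z‖ := norm_inner_le_norm _ _
    _ ≤ (‖A‖ * ‖z‖) * ‖z‖ := by
        have := A.le_opNorm z
        nlinarith [norm_nonneg z, norm_nonneg (A z)]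
    _ = ‖A‖ * ‖z‖^2 := by ring

private lemma key_norm_sq {B A : H →L[ℂ] H} (hB : B.IsPositive)
    (hBA : ∀ y, re ⟪B y, y⟫ ≤ re ⟪A y, y⟫) (x : H) :
    ‖B x‖^2 ≤ ‖A‖ * re ⟪B x, x⟫ := by
  have h1 := key_cs hB x (B x)
  have h2 : re ⟪B x, B x⟫ = ‖B x‖^2 := inner_self_eq_norm_sq _
  have h3 : re ⟪B (B x), B x⟫ ≤ ‖A‖ * ‖B x‖^2 :=
    (hBA (B x)).trans (re_inner_le_opNorm A (B x))
  have hpos : 0 ≤ re ⟪B x, x⟫ := hB.2 x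
  rcases eq_or_lt_of_le (sq_nonneg ‖B x‖) with h0 | h0
  · rw [← h0]
    positivity
  · rw [h2] at h1
    nlinarith [h1, h3, h0, hpos]

private lemma re_sub_apply (T U : H →L[ℂ] H) (x : H) :
    re ⟪(T - U) x, x⟫ = re ⟪T x, x⟫ - re ⟪U x, x⟫ := by
  simp [ContinuousLinearMap.sub_apply, inner_sub_left]

private lemma isPositive_iff' (T : H →L[ℂ] H) :
    T.IsPositive ↔ IsSelfAdjoint T ∧ ∀ x, 0 ≤ re ⟪T x, x⟫ := ContinuousLinearMap.isPositive_def'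

/-- The hard direction: order convergence implies strong convergence. -/
private lemma forward_aux (L : Submodule ℂ (H →L[ℂ] H))
    (hL : ∀ (ι : Type) [Preorder ι], ∀ (T : ι → H →L[ℂ] H) (T' : H →L[ℂ] H),
      (∀ i, T i ∈ L) →
      (∀ x : H, Tendsto (fun i => T i x) atTop (nhds (T' x))) → T' ∈ L)
    (S : ℕ → (H →L[ℂ] H)) (A : H →L[ℂ] H)
    (hA : A.IsPositive)
    (hSL : ∀ N, S N ∈ L)
    (hS0 : S 0 = 0)
    (hmono : ∀ N M, N ≤ M → (S M - S N).IsPositive)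
    (hub : ∀ N, (A - S N).IsPositive)
    (hleast : ∀ T : H →L[ℂ] H, T ∈ L → IsSelfAdjoint T →
      (∀ N, (T - S N).IsPositive) → (T - A).IsPositive)
    (x : H) : Tendsto (fun N => S N x) atTop (nhds (A x)) := by
  classical
  have hSpos : ∀ N, (S N).IsPositive := by
    intro N
    have := hmono 0 N (Nat.zero_le N)
    rwa [hS0, sub_zero] at this
  have hSsa : ∀ N, IsSelfAdjoint (S N) := fun N => (hSpos N).isSelfAdjoint
  -- pointwise monotone and bounded numerical sequences
  have gmono : ∀ z : H, Monotone (fun N => re ⟪S N z, z⟫) := by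
    intro z N M h
    have h2 := (hmono N M h).2 z
    rw [ContinuousLinearMap.reApplyInnerSelf_apply, re_sub_apply] at h2
    linarith
  have gbdd : ∀ (z : H) (N : ℕ), re ⟪S N z, z⟫ ≤ re ⟪A z, z⟫ := by
    intro z N
    have h2 := (hub N).2 z
    rw [ContinuousLinearMap.reApplyInnerSelf_apply, re_sub_apply] at h2
    linarith
  -- S N ≤ A pointwise in the quadratic form sense, for differences too
  have hdiffA : ∀ N M, N ≤ M → ∀ y, re ⟪(S M - S N) y, y⟫ ≤ re ⟪A y, y⟫ := by
    intro N M h y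
    rw [re_sub_apply]
    have h1 := (hSpos N).2 y
    rw [ContinuousLinearMap.reApplyInnerSelf_apply] at h1
    linarith [gbdd y M]
  have key : ∀ N M, N ≤ M → ∀ z : H,
      ‖S M z - S N z‖^2 ≤ ‖A‖ * (re ⟪S M z, z⟫ - re ⟪S N z, z⟫) := by
    intro N M h z
    have := key_norm_sq (hmono N M h) (hdiffA N M h) z
    rw [re_sub_apply] at this
    simpa [ContinuousLinearMap.sub_apply] using this
  -- convergence of the numerical sequences
  have hgconv : ∀ z : H, ∃ r : ℝ, Tendsto (fun N => re ⟪S N z, z⟫) atTop (nhds r) := by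
    intro z
    exact ⟨_, tendsto_atTop_ciSup (gmono z) ⟨re ⟪A z, z⟫, by
      rintro r ⟨N, rfl⟩; exact gbdd z N⟩⟩
  -- strong convergence of S N z
  have hconv : ∀ z : H, ∃ y : H, Tendsto (fun N => S N z) atTop (nhds y) := by
    intro z
    obtain ⟨r, hr⟩ := hgconv z
    have hgler : ∀ N, re ⟪S N z, z⟫ ≤ r := fun N => Monotone.ge_of_tendsto (gmono z) hr N
    have hcauchy : CauchySeq (fun N => S N z) := by
      refine cauchySeq_of_le_tendsto_0 (fun N => Real.sqrt (‖A‖ * (r - re ⟪S N z, z⟫)))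
        ?_ ?_
      · intro n m N hn hm
        rcases le_total n m with h | h
        · rw [dist_eq_norm, norm_sub_rev]
          rw [Real.le_sqrt (norm_nonneg _)]
          · refine (key n m h z).trans ?_
            have h1 := gmono z hn
            have h2 := hgler m
            have hAn := norm_nonneg A
            nlinarith
          · exact mul_nonneg (norm_nonneg A) (sub_nonneg.mpr (hgler N))
        · rw [dist_eq_norm]
          rw [Real.le_sqrt (norm_nonneg _)]
          · refine (key m n h z).trans ?_
            have h1 := gmono z hm
            have h2 := hgler n
            have hAn := norm_nonneg A
            nlinarith
          · exact mul_nonneg (norm_nonneg A) (sub_nonneg.mpr (hgler N))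
      · have h1 : Tendsto (fun N => ‖A‖ * (r - re ⟪S N z, z⟫)) atTop (nhds (‖A‖ * (r - r))) :=
          ((tendsto_const_nhds.sub hr)).const_mul _
        rw [sub_self, mul_zero] at h1
        have h2 := (Real.continuous_sqrt.tendsto 0).comp h1
        rw [Real.sqrt_zero] at h2
        exact h2
    exact cauchySeq_tendsto_of_complete hcauchy
  choose l hl using hconv
  have hadd : ∀ u v : H, l (u + v) = l u + l v := by
    intro u v
    refine tendsto_nhds_unique (hl (u + v)) ?_
    have := (hl u).add (hl v)
    simpa [ContinuousLinearMap.map_add] using this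
  have hsmul : ∀ (c : ℂ) (u : H), l (c • u) = c • l u := by
    intro c u
    refine tendsto_nhds_unique (hl (c • u)) ?_
    have := (hl u).const_smul c
    simpa [ContinuousLinearMap.map_smul] using this
  have hSnorm : ∀ (N : ℕ) (z : H), ‖S N z‖ ≤ ‖A‖ * ‖z‖ := by
    intro N z
    have hBA : ∀ y, re ⟪S N y, y⟫ ≤ re ⟪A y, y⟫ := fun y => gbdd y N
    have h1 := key_norm_sq (hSpos N) hBA z
    have h2 : re ⟪S N z, z⟫ ≤ ‖A‖ * ‖z‖^2 := (hBA z).trans (re_inner_le_opNorm A z)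
    have h3 : ‖S N z‖^2 ≤ (‖A‖ * ‖z‖)^2 := by nlinarith [norm_nonneg A, norm_nonneg z]
    exact le_of_pow_le_pow_left₀ two_ne_zero (by positivity) h3
  have hbound : ∀ z : H, ‖l z‖ ≤ ‖A‖ * ‖z‖ :=
    fun z => le_of_tendsto (hl z).norm (Filter.Eventually.of_forall fun N => hSnorm N z)
  let T₀ : H →ₗ[ℂ] H := { toFun := l, map_add' := hadd, map_smul' := hsmul }
  let T : H →L[ℂ] H := T₀.mkContinuous ‖A‖ hbound
  have hTapply : ∀ z, T z = l z := fun _ => rfl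
  have hlT : ∀ z, Tendsto (fun N => S N z) atTop (nhds (T z)) := by
    intro z; rw [hTapply]; exact hl z
  have hTL : T ∈ L := hL ℕ S T hSL hlT
  have hTg : ∀ z : H, Tendsto (fun N => re ⟪S N z, z⟫) atTop (nhds (re ⟪T z, z⟫)) := by
    intro z
    exact (RCLike.continuous_re.tendsto _).comp ((hlT z).inner tendsto_const_nhds)
  have hTsa : IsSelfAdjoint T := by
    rw [ContinuousLinearMap.isSelfAdjoint_iff_isSymmetric]
    intro u v
    have h1 : Tendsto (fun N => (⟪S N u, v⟫ : ℂ)) atTop (nhds ⟪T u, v⟫) :=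
      (hlT u).inner tendsto_const_nhds
    have h2 : Tendsto (fun N => (⟪u, S N v⟫ : ℂ)) atTop (nhds ⟪u, T v⟫) :=
      tendsto_const_nhds.inner (hlT v)
    have heq : (fun N => (⟪S N u, v⟫ : ℂ)) = fun N => (⟪u, S N v⟫ : ℂ) := by
      funext N
      have := ContinuousLinearMap.isSelfAdjoint_iff_isSymmetric.mp (hSsa N) u v
      simpa using this
    rw [heq] at h1
    simpa using tendsto_nhds_unique h1 h2
  have hTub : ∀ N, (T - S N).IsPositive := by
    intro N
    refine ⟨isSelfAdjoint_iff_isSymmetric.mp (hTsa.sub (hSsa N)), fun z => ?_⟩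
    rw [ContinuousLinearMap.reApplyInnerSelf_apply, re_sub_apply, sub_nonneg]
    refine ge_of_tendsto (hTg z) ?_
    filter_upwards [Filter.eventually_ge_atTop N] with M hM
    exact gmono z hM
  have hTleA : (A - T).IsPositive := by
    refine ⟨hA.1.sub (isSelfAdjoint_iff_isSymmetric.mp hTsa), fun z => ?_⟩
    rw [ContinuousLinearMap.reApplyInnerSelf_apply, re_sub_apply, sub_nonneg]
    exact le_of_tendsto (hTg z) (Filter.Eventually.of_forall fun N => gbdd z N)
  have hAleT : (T - A).IsPositive := hleast T hTL hTsa hTub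
  have hTA : T = A := by
    have h1 : T ≤ A := (ContinuousLinearMap.le_def T A).mpr hTleA
    have h2 : A ≤ T := (ContinuousLinearMap.le_def A T).mpr hAleT
    exact le_antisymm h1 h2
  rw [← hTA]
  exact hlT x

end Helpers

section Main

variable {H : Type} [NormedAddCommGroup H] [InnerProductSpace ℂ H] [CompleteSpace H]

private lemma backward_aux (S : ℕ → (H →L[ℂ] H)) (A : H →L[ℂ] H)
    (hA : A.IsPositive) (hSsa : ∀ N, IsSelfAdjoint (S N))
    (hmono : ∀ N M, N ≤ M → (S M - S N).IsPositive)
    (h : ∀ x : H, Tendsto (fun N => S N x) atTop (nhds (A x))) :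
    (∀ N, (A - S N).IsPositive) ∧
      ∀ T : H →L[ℂ] H, IsSelfAdjoint T → (∀ N, (T - S N).IsPositive) →
        (T - A).IsPositive := by
  have htg : ∀ z : H, Tendsto (fun N => re ⟪S N z, z⟫) atTop (nhds (re ⟪A z, z⟫)) := by
    intro z
    exact (RCLike.continuous_re.tendsto _).comp ((h z).inner tendsto_const_nhds)
  have gmono : ∀ (z : H) (N M : ℕ), N ≤ M → re ⟪S N z, z⟫ ≤ re ⟪S M z, z⟫ := by
    intro z N M hNM
    have h2 := (hmono N M hNM).2 z
    rw [ContinuousLinearMap.reApplyInnerSelf_apply, re_sub_apply] at h2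
    linarith
  constructor
  · intro N
    refine ⟨hA.1.sub (isSelfAdjoint_iff_isSymmetric.mp (hSsa N)), fun z => ?_⟩
    rw [ContinuousLinearMap.reApplyInnerSelf_apply, re_sub_apply, sub_nonneg]
    refine ge_of_tendsto (htg z) ?_
    filter_upwards [Filter.eventually_ge_atTop N] with M hM
    exact gmono z N M hM
  · intro T hTsa hTub
    refine ⟨isSelfAdjoint_iff_isSymmetric.mp (hTsa.sub hA.isSelfAdjoint), fun z => ?_⟩
    rw [ContinuousLinearMap.reApplyInnerSelf_apply, re_sub_apply, sub_nonneg]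
    refine le_of_tendsto (htg z) (Filter.Eventually.of_forall fun N => ?_)
    have h2 := (hTub N).2 z
    rw [ContinuousLinearMap.reApplyInnerSelf_apply, re_sub_apply] at h2
    linarith

private lemma isPositive_sum {ι : Type*} (s : Finset ι) (f : ι → H →L[ℂ] H)
    (hf : ∀ i ∈ s, (f i).IsPositive) : (∑ i ∈ s, f i).IsPositive :=
  Finset.sum_induction f _ (fun _ _ ha hb => ha.add hb)
    ContinuousLinearMap.isPositive_zero hf

end Main

/-- Let `H` be a complex Hilbert space, `L` a strongly closed complex linear
subspace of `B(H)`, `μ` a map on a measurable space with values in the positive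
cone of `L_sa` and `μ ∅ = 0`, and `(Δ_n)` a sequence of measurable sets.  Then
`μ(⋃ Δ_n)` is the supremum in `L_sa` of the partial sums `∑_{n<N} μ(Δ_n)`
(order σ-additivity) iff `μ(⋃ Δ_n) x = ∑_n μ(Δ_n) x` in the norm of `H` for
every `x ∈ H` (strong σ-additivity). -/
theorem order_sigma_additive_iff_strong_sigma_additive
    {H : Type} [NormedAddCommGroup H] [InnerProductSpace ℂ H] [CompleteSpace H]
    (L : Submodule ℂ (H →L[ℂ] H))
    (hL : ∀ (ι : Type) [Preorder ι], ∀ (T : ι → H →L[ℂ] H) (T' : H →L[ℂ] H),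
      (∀ i, T i ∈ L) →
      (∀ x : H, Filter.Tendsto (fun i => T i x) Filter.atTop (nhds (T' x))) → T' ∈ L)
    {X : Type} [MeasurableSpace X]
    (μ : Set X → (H →L[ℂ] H))
    (hμ : ∀ s : Set X, MeasurableSet s → μ s ∈ L ∧ (μ s).IsPositive)
    (h0 : μ ∅ = 0)
    (Δ : ℕ → Set X) (hΔ : ∀ n, MeasurableSet (Δ n)) :
    (((∀ N : ℕ, (μ (⋃ n, Δ n) - ∑ n ∈ Finset.range N, μ (Δ n)).IsPositive) ∧
       ∀ S : H →L[ℂ] H, S ∈ L → IsSelfAdjoint S →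
         (∀ N : ℕ, (S - ∑ n ∈ Finset.range N, μ (Δ n)).IsPositive) →
         (S - μ (⋃ n, Δ n)).IsPositive) ↔
      (∀ x : H, Filter.Tendsto (fun N => ∑ n ∈ Finset.range N, μ (Δ n) x)
        Filter.atTop (nhds (μ (⋃ n, Δ n) x)))) := by
  classical
  set A : H →L[ℂ] H := μ (⋃ n, Δ n) with hAdef
  have hA : A.IsPositive := (hμ _ (MeasurableSet.iUnion hΔ)).2
  set S : ℕ → (H →L[ℂ] H) := fun N => ∑ n ∈ Finset.range N, μ (Δ n) with hSdef
  have hSL : ∀ N, S N ∈ L := fun N =>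
    Submodule.sum_mem L fun n _ => (hμ _ (hΔ n)).1
  have hS0 : S 0 = 0 := by simp [hSdef]
  have hmono : ∀ N M, N ≤ M → (S M - S N).IsPositive := by
    intro N M h
    have heq : S M - S N = ∑ n ∈ Finset.Ico N M, μ (Δ n) := by
      rw [hSdef]
      simp only
      rw [Finset.sum_Ico_eq_sub _ h]
    rw [heq]
    exact isPositive_sum _ _ fun n _ => (hμ _ (hΔ n)).2
  have happly : ∀ N x, S N x = ∑ n ∈ Finset.range N, μ (Δ n) x := by
    intro N x
    simp [hSdef, ContinuousLinearMap.sum_apply]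
  constructor
  · rintro ⟨hub, hleast⟩ x
    have := forward_aux L hL S A hA hSL hS0 hmono hub
      (fun T hTL hTsa hTub => hleast T hTL hTsa hTub) x
    simpa [happly] using this
  · intro h
    have h' : ∀ x : H, Filter.Tendsto (fun N => S N x) Filter.atTop (nhds (A x)) := by
      intro x
      have := h x
      simpa [happly] using this
    have hSsa : ∀ N, IsSelfAdjoint (S N) := fun N =>
      (isPositive_sum _ _ fun n _ => (hμ _ (hΔ n)).2).isSelfAdjoint
    obtain ⟨h1, h2⟩ := backward_aux S A hA hSsa hmono h'
    exact ⟨h1, fun T _ hTsa hTub => h2 T hTsa hTub⟩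
end

section
/- Borel–Cantelli lemma, first part: Let (X, Ω, μ, E) be a measure space and (Δ_n) ⊆ Ω with Γ_k := ⋃_{n≥k} Δ_n ∈ Ω for all k and Γ := ⋂_k Γ_k ∈ Ω. If ⋁_{N≥1} ∑_{n=1}^N μ(Δ_n) is finite (lies in E), then μ(Γ) = 0. -/
open Set

section Aux

variable {X : Type*} {E : Type*} [AddCommGroup E] [PartialOrder E] [IsOrderedAddMonoid E]

/-- Finite additivity for a pair, derived from σ-additivity. -/
theorem bc_pair_add
    (Ω : Set (Set X)) (hΩempty : ∅ ∈ Ω)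
    (μ : Set X → WithTop E) (hpos : ∀ s ∈ Ω, 0 ≤ μ s) (h0 : μ ∅ = 0)
    (hadd : ∀ Δ : ℕ → Set X, (∀ n, Δ n ∈ Ω) → (∀ m n, m ≠ n → Disjoint (Δ m) (Δ n)) →
      (⋃ n, Δ n) ∈ Ω →
      IsLUB (Set.range fun N => ∑ n ∈ Finset.range N, μ (Δ n)) (μ (⋃ n, Δ n)))
    {s t : Set X} (hs : s ∈ Ω) (ht : t ∈ Ω) (hst : Disjoint s t) (hu : s ∪ t ∈ Ω) :
    μ (s ∪ t) = μ s + μ t := by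
  classical
  set f : ℕ → Set X := fun n => if n = 0 then s else if n = 1 then t else ∅ with hf
  have hfΩ : ∀ n, f n ∈ Ω := by
    intro n; simp only [hf]; split_ifs <;> assumption
  have hdisj : ∀ m n, m ≠ n → Disjoint (f m) (f n) := by
    intro m n hmn
    simp only [hf]
    split_ifs <;>
      first
        | exact absurd (by omega) hmn
        | exact hst
        | exact hst.symm
        | exact Set.disjoint_empty _
        | exact (Set.disjoint_empty _).symm
        | exact Set.empty_disjoint _
  have hunion : (⋃ n, f n) = s ∪ t := by
    apply subset_antisymm
    · apply Set.iUnion_subset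
      intro n
      simp only [hf]
      split_ifs with h1 h2
      · exact Set.subset_union_left
      · exact Set.subset_union_right
      · exact Set.empty_subset _
    · apply Set.union_subset
      · exact Set.subset_iUnion_of_subset 0 (by simp [hf])
      · exact Set.subset_iUnion_of_subset 1 (by simp [hf])
  have hzero : ∀ n, 2 ≤ n → μ (f n) = 0 := by
    intro n hn
    have : f n = ∅ := by simp only [hf]; rw [if_neg (by omega), if_neg (by omega)]
    rw [this, h0]
  have h2 : (∑ n ∈ Finset.range 2, μ (f n)) = μ s + μ t := by
    rw [Finset.sum_range_succ, Finset.sum_range_one]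
    simp [hf]
  have hub : ∀ N, (∑ n ∈ Finset.range N, μ (f n)) ≤ μ s + μ t := by
    intro N
    rw [← h2]
    rcases le_or_gt N 2 with h | h
    · exact Finset.sum_le_sum_of_subset_of_nonneg
        (Finset.range_subset_range.mpr h) (fun i _ _ => hpos _ (hfΩ i))
    · refine le_of_eq (Finset.sum_subset (Finset.range_subset_range.mpr h.le) ?_).symm
      intro x _ hx
      exact hzero x (by simp at hx; omega)
  have hlub2 : IsLUB (Set.range fun N => ∑ n ∈ Finset.range N, μ (f n)) (μ s + μ t) := by
    constructor
    · rintro x ⟨N, rfl⟩; exact hub N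
    · intro c hc; exact hc ⟨2, h2⟩
  have := hadd f hfΩ hdisj (by rwa [hunion])
  rw [hunion] at this
  exact this.unique hlub2

/-- Monotonicity of the measure on the algebra. -/
theorem bc_mono
    (Ω : Set (Set X)) (hΩempty : ∅ ∈ Ω) (hΩcompl : ∀ s ∈ Ω, sᶜ ∈ Ω)
    (hΩunion : ∀ s ∈ Ω, ∀ t ∈ Ω, s ∪ t ∈ Ω)
    (μ : Set X → WithTop E) (hpos : ∀ s ∈ Ω, 0 ≤ μ s) (h0 : μ ∅ = 0)
    (hadd : ∀ Δ : ℕ → Set X, (∀ n, Δ n ∈ Ω) → (∀ m n, m ≠ n → Disjoint (Δ m) (Δ n)) →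
      (⋃ n, Δ n) ∈ Ω →
      IsLUB (Set.range fun N => ∑ n ∈ Finset.range N, μ (Δ n)) (μ (⋃ n, Δ n)))
    {s t : Set X} (hs : s ∈ Ω) (ht : t ∈ Ω) (hsub : s ⊆ t) :
    μ s ≤ μ t := by
  have hdiffΩ : t \ s ∈ Ω := by
    have : t \ s = (tᶜ ∪ s)ᶜ := by ext x; simp only [Set.mem_diff, Set.mem_compl_iff, Set.mem_union]; tauto
    rw [this]
    exact hΩcompl _ (hΩunion _ (hΩcompl _ ht) _ hs)
  have hcup : s ∪ (t \ s) = t := Set.union_diff_cancel hsub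
  have := bc_pair_add Ω hΩempty μ hpos h0 hadd hs hdiffΩ
    disjoint_sdiff_self_right (by rwa [hcup])
  rw [hcup] at this
  rw [this]
  exact le_add_of_nonneg_right (hpos _ hdiffΩ)

end Aux

/-- Borel–Cantelli lemma, first part: if the supremum of the partial sums
`∑_{n<N} μ(Δ_n)` exists in `E̅` and is finite, then the limsup set
`Γ = ⋂_k ⋃_{n≥k} Δ_n` has measure zero. -/
theorem borel_cantelli_first
    {X : Type*} {E : Type*} [AddCommGroup E] [PartialOrder E] [IsOrderedAddMonoid E] [Module ℝ E]
    [PosSMulStrictMono ℝ E] [PosSMulReflectLT ℝ E]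
    (hσ : ∀ a : ℕ → E, Monotone a → BddAbove (Set.range a) → ∃ s, IsLUB (Set.range a) s)
    (Ω : Set (Set X)) (hΩempty : ∅ ∈ Ω) (hΩcompl : ∀ s ∈ Ω, sᶜ ∈ Ω)
    (hΩunion : ∀ s ∈ Ω, ∀ t ∈ Ω, s ∪ t ∈ Ω)
    (μ : Set X → WithTop E) (hpos : ∀ s ∈ Ω, 0 ≤ μ s) (h0 : μ ∅ = 0)
    (hadd : ∀ Δ : ℕ → Set X, (∀ n, Δ n ∈ Ω) → (∀ m n, m ≠ n → Disjoint (Δ m) (Δ n)) →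
      (⋃ n, Δ n) ∈ Ω →
      IsLUB (Set.range fun N => ∑ n ∈ Finset.range N, μ (Δ n)) (μ (⋃ n, Δ n)))
    (Δ : ℕ → Set X) (hΔ : ∀ n, Δ n ∈ Ω)
    (hΓk : ∀ k : ℕ, (⋃ n, ⋃ (_ : k ≤ n), Δ n) ∈ Ω)
    (hΓ : (⋂ k : ℕ, ⋃ n, ⋃ (_ : k ≤ n), Δ n) ∈ Ω)
    (hfin : ∃ b : E,
      IsLUB (Set.range fun N => ∑ n ∈ Finset.range N, μ (Δ n)) (↑b : WithTop E)) :
    μ (⋂ k : ℕ, ⋃ n, ⋃ (_ : k ≤ n), Δ n) = 0 := by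
  classical
  obtain ⟨b, hb⟩ := hfin
  set S : ℕ → WithTop E := fun N => ∑ n ∈ Finset.range N, μ (Δ n) with hS
  -- closure of Ω under differences
  have hΩdiff : ∀ s ∈ Ω, ∀ t ∈ Ω, s \ t ∈ Ω := by
    intro s hs t ht
    have : s \ t = (sᶜ ∪ t)ᶜ := by ext x; simp only [Set.mem_diff, Set.mem_compl_iff, Set.mem_union]; tauto
    rw [this]
    exact hΩcompl _ (hΩunion _ (hΩcompl _ hs) _ ht)
  -- key bound for each k : μ Γ + S k ≤ b
  have key : ∀ k : ℕ, ∀ sk : E, S k = ↑sk →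
      μ (⋂ k : ℕ, ⋃ n, ⋃ (_ : k ≤ n), Δ n) ≤ ↑(b - sk) := by
    intro k sk hsk
    set D : ℕ → Set X := disjointed (fun n => Δ (k + n)) with hD
    have hDΩ : ∀ n, D n ∈ Ω := by
      have hps : ∀ n, (partialSups (fun n => Δ (k + n)) n : Set X) ∈ Ω := by
        intro n
        induction n with
        | zero => simpa using hΔ k
        | succ m ih =>
          rw [partialSups_add_one]
          exact hΩunion _ ih _ (hΔ _)
      intro n
      cases n with
      | zero => simpa [hD, disjointed_zero] using hΔ k
      | succ m =>
        rw [hD, disjointed_add_one]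
        exact hΩdiff _ (hΔ _) _ (hps m)
    have hU : (⋃ n, D n) = ⋃ n, ⋃ (_ : k ≤ n), Δ n := by
      rw [hD, iUnion_disjointed]
      ext x
      simp only [Set.mem_iUnion]
      constructor
      · rintro ⟨n, hn⟩; exact ⟨k + n, Nat.le_add_right _ _, hn⟩
      · rintro ⟨n, hkn, hn⟩
        exact ⟨n - k, by rwa [Nat.add_sub_cancel' hkn]⟩
    have hlub : IsLUB (Set.range fun N => ∑ n ∈ Finset.range N, μ (D n))
        (μ (⋃ n, ⋃ (_ : k ≤ n), Δ n)) := by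
      have := hadd D hDΩ
        (fun m n hmn => disjoint_disjointed (fun n => Δ (k + n)) hmn)
        (by rw [hU]; exact hΓk k)
      rwa [hU] at this
    -- each partial sum of the D's is ≤ b - sk
    have hbnd : ∀ N, (∑ n ∈ Finset.range N, μ (D n)) ≤ ↑(b - sk) := by
      intro N
      have h1 : (∑ n ∈ Finset.range N, μ (D n)) ≤ ∑ n ∈ Finset.range N, μ (Δ (k + n)) :=
        Finset.sum_le_sum fun i _ =>
          bc_mono Ω hΩempty hΩcompl hΩunion μ hpos h0 hadd (hDΩ i) (hΔ _)
            (disjointed_subset _ i)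
      have h2 : S k + (∑ n ∈ Finset.range N, μ (Δ (k + n))) = S (k + N) := by
        rw [hS]; exact (Finset.sum_range_add (fun n => μ (Δ n)) k N).symm
      have h3 : S (k + N) ≤ ↑b := hb.1 ⟨k + N, rfl⟩
      have h4 : (↑sk : WithTop E) + (∑ n ∈ Finset.range N, μ (D n)) ≤ ↑b := by
        calc (↑sk : WithTop E) + (∑ n ∈ Finset.range N, μ (D n))
            ≤ ↑sk + ∑ n ∈ Finset.range N, μ (Δ (k + n)) := by
              exact add_le_add_right h1 _
          _ = S (k + N) := by rw [← hsk]; exact h2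
          _ ≤ ↑b := h3
      -- extract finiteness
      rcases eq_or_ne (∑ n ∈ Finset.range N, μ (D n)) ⊤ with htop | hne
      · exfalso
        rw [htop, WithTop.add_top] at h4
        exact absurd h4 (by simp)
      · obtain ⟨p, hp⟩ := WithTop.ne_top_iff_exists.mp hne
        rw [← hp] at h4 ⊢
        rw [← WithTop.coe_add, WithTop.coe_le_coe] at h4
        rw [WithTop.coe_le_coe]
        rw [add_comm] at h4
        exact le_sub_iff_add_le.mpr h4
    have hΓk_le : μ (⋃ n, ⋃ (_ : k ≤ n), Δ n) ≤ ↑(b - sk) := by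
      apply hlub.2
      rintro x ⟨N, rfl⟩
      exact hbnd N
    calc μ (⋂ k : ℕ, ⋃ n, ⋃ (_ : k ≤ n), Δ n)
        ≤ μ (⋃ n, ⋃ (_ : k ≤ n), Δ n) :=
          bc_mono Ω hΩempty hΩcompl hΩunion μ hpos h0 hadd hΓ (hΓk k)
            (Set.iInter_subset _ k)
      _ ≤ ↑(b - sk) := hΓk_le
  -- S k is finite for every k
  have hSfin : ∀ k, ∃ sk : E, S k = ↑sk := by
    intro k
    have h3 : S k ≤ ↑b := hb.1 ⟨k, rfl⟩
    have : S k ≠ ⊤ := ne_top_of_le_ne_top (WithTop.coe_ne_top) h3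
    obtain ⟨sk, hsk⟩ := WithTop.ne_top_iff_exists.mp this
    exact ⟨sk, hsk.symm⟩
  -- μ Γ is finite
  obtain ⟨s0, hs0⟩ := hSfin 0
  have hμΓ_le := key 0 s0 hs0
  have hμΓ_ne : μ (⋂ k : ℕ, ⋃ n, ⋃ (_ : k ≤ n), Δ n) ≠ ⊤ :=
    ne_top_of_le_ne_top (WithTop.coe_ne_top) hμΓ_le
  obtain ⟨g, hg⟩ := WithTop.ne_top_iff_exists.mp hμΓ_ne
  -- for every k, S k ≤ b - g
  have hub : ∀ x ∈ Set.range S, x ≤ (↑(b - g) : WithTop E) := by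
    rintro x ⟨k, rfl⟩
    obtain ⟨sk, hsk⟩ := hSfin k
    have hk := key k sk hsk
    rw [← hg, WithTop.coe_le_coe] at hk
    have : sk ≤ b - g := by
      have h1 : g + sk ≤ b := le_sub_iff_add_le.mp hk
      rw [add_comm] at h1
      exact le_sub_iff_add_le.mpr h1
    rw [hsk, WithTop.coe_le_coe]
    exact this
  have hble : (↑b : WithTop E) ≤ ↑(b - g) := hb.2 hub
  rw [WithTop.coe_le_coe] at hble
  have hg0 : g ≤ 0 := (le_sub_self_iff b).mp hble
  have hg0' : 0 ≤ g := by
    have := hpos _ hΓ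
    rw [← hg] at this
    exact_mod_cast this
  rw [← hg, le_antisymm hg0 hg0', WithTop.coe_zero]
end

section
/- Borel–Cantelli lemma, second part: Let (X, Ω, μ, E) be a measure space, (Δ_n) ⊆ Ω with Γ_k := ⋃_{n≥k} Δ_n ∈ Ω for all k and Γ := ⋂_k Γ_k ∈ Ω. If μ((⋃_n Δ_n) \ Γ) is finite, then μ(Γ) ≥ x in E̅ for every x ∈ E satisfying μ(Δ_n) ≥ x for all n. -/
set_option maxHeartbeats 1000000 in
/-- Finite (pairwise) additivity derived from σ-additivity. -/
theorem pairAdd {X : Type*} {E : Type*} [AddCommGroup E] [PartialOrder E] [IsOrderedAddMonoid E]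
    (Ω : Set (Set X))
    (μ : Set X → WithTop E) (hpos : ∀ s ∈ Ω, 0 ≤ μ s) (h0 : μ ∅ = 0)
    (hΩempty : ∅ ∈ Ω)
    (hadd : ∀ Δ : ℕ → Set X, (∀ n, Δ n ∈ Ω) → (∀ m n, m ≠ n → Disjoint (Δ m) (Δ n)) →
      (⋃ n, Δ n) ∈ Ω →
      IsLUB (Set.range fun N => ∑ n ∈ Finset.range N, μ (Δ n)) (μ (⋃ n, Δ n)))
    (s t : Set X) (hs : s ∈ Ω) (ht : t ∈ Ω) (hst : Disjoint s t)
    (hu : s ∪ t ∈ Ω) : μ (s ∪ t) = μ s + μ t := by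
  classical
  set f : ℕ → Set X := fun n => match n with | 0 => s | 1 => t | _ => ∅ with hf
  have hfΩ : ∀ n, f n ∈ Ω := by
    intro n; rcases n with _ | _ | n <;> simpa [f]
  have hfd : ∀ m n, m ≠ n → Disjoint (f m) (f n) := by
    intro m n hmn
    rcases m with _ | _ | m <;> rcases n with _ | _ | n <;>
      simp_all [f, hst, hst.symm, Set.disjoint_empty, Set.empty_disjoint]
  have hfu : (⋃ n, f n) = s ∪ t := by
    apply subset_antisymm
    · refine Set.iUnion_subset fun n => ?_
      rcases n with _ | _ | n <;>
        simp [f, Set.subset_union_left, Set.subset_union_right]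
    · refine Set.union_subset ?_ ?_
      · simpa [f] using Set.subset_iUnion f 0
      · simpa [f] using Set.subset_iUnion f 1
  have h := hadd f hfΩ hfd (by rw [hfu]; exact hu)
  rw [hfu] at h
  have h2 : ∑ n ∈ Finset.range 2, μ (f n) = μ s + μ t := by
    simp [Finset.sum_range_succ, f]
  have hub : ∀ N, ∑ n ∈ Finset.range N, μ (f n) ≤ μ s + μ t := by
    intro N
    rcases le_total N 2 with hN | hN
    · rw [← h2]
      exact Finset.sum_le_sum_of_subset_of_nonneg (Finset.range_subset_range.2 hN)
        (fun i _ _ => hpos _ (hfΩ i))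
    · rw [← h2]
      refine le_of_eq (Finset.sum_subset (Finset.range_subset_range.2 hN) ?_).symm
      intro i hi hi2
      simp only [Finset.mem_range, not_lt] at hi2
      match i, hi2 with
      | (n+2), _ => exact h0
  have hlub : IsLUB (Set.range fun N => ∑ n ∈ Finset.range N, μ (f n)) (μ s + μ t) := by
    constructor
    · rintro y ⟨N, rfl⟩
      exact hub N
    · intro b hb
      exact h2 ▸ hb ⟨2, rfl⟩
  exact h.unique hlub

/-- Borel–Cantelli lemma, second part: if `μ((⋃ Δ_n) \ Γ)` is finite, where `Γ`
is the limsup set of the `Δ_n`, then `μ(Γ) ≥ x` in `E̅` for every `x ∈ E` with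
`μ(Δ_n) ≥ x` for all `n`. -/
theorem borel_cantelli_second
    {X : Type*} {E : Type*} [AddCommGroup E] [PartialOrder E] [IsOrderedAddMonoid E] [Module ℝ E]
      [PosSMulStrictMono ℝ E] [PosSMulReflectLT ℝ E]
    (hσ : ∀ a : ℕ → E, Monotone a → BddAbove (Set.range a) → ∃ s, IsLUB (Set.range a) s)
    (Ω : Set (Set X)) (hΩempty : ∅ ∈ Ω) (hΩcompl : ∀ s ∈ Ω, sᶜ ∈ Ω)
    (hΩunion : ∀ s ∈ Ω, ∀ t ∈ Ω, s ∪ t ∈ Ω)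
    (μ : Set X → WithTop E) (hpos : ∀ s ∈ Ω, 0 ≤ μ s) (h0 : μ ∅ = 0)
    (hadd : ∀ Δ : ℕ → Set X, (∀ n, Δ n ∈ Ω) → (∀ m n, m ≠ n → Disjoint (Δ m) (Δ n)) →
      (⋃ n, Δ n) ∈ Ω →
      IsLUB (Set.range fun N => ∑ n ∈ Finset.range N, μ (Δ n)) (μ (⋃ n, Δ n)))
    (Δ : ℕ → Set X) (hΔ : ∀ n, Δ n ∈ Ω)
    (hΓk : ∀ k : ℕ, (⋃ n, ⋃ (_ : k ≤ n), Δ n) ∈ Ω)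
    (hΓ : (⋂ k : ℕ, ⋃ n, ⋃ (_ : k ≤ n), Δ n) ∈ Ω)
    (hfin : ∃ e : E,
      μ ((⋃ n, Δ n) \ (⋂ k : ℕ, ⋃ n, ⋃ (_ : k ≤ n), Δ n)) = (↑e : WithTop E)) :
    ∀ x : E, (∀ n, (↑x : WithTop E) ≤ μ (Δ n)) →
      (↑x : WithTop E) ≤ μ (⋂ k : ℕ, ⋃ n, ⋃ (_ : k ≤ n), Δ n) := by
  classical
  intro x hx
  let Γk : ℕ → Set X := fun k => ⋃ n, ⋃ (_ : k ≤ n), Δ n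
  show (↑x : WithTop E) ≤ μ (⋂ k, Γk k)
  -- closure properties
  have hΩinter : ∀ s ∈ Ω, ∀ t ∈ Ω, s ∩ t ∈ Ω := by
    intro s hs t ht
    have h := hΩcompl _ (hΩunion _ (hΩcompl s hs) _ (hΩcompl t ht))
    simpa [Set.compl_union, compl_compl] using h
  have hΩdiff : ∀ s ∈ Ω, ∀ t ∈ Ω, s \ t ∈ Ω := by
    intro s hs t ht
    rw [Set.diff_eq]; exact hΩinter s hs _ (hΩcompl t ht)
  have hmono : ∀ {k l : ℕ}, k ≤ l → Γk l ⊆ Γk k := by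
    intro k l hkl y hy
    simp only [Γk, Set.mem_iUnion] at hy ⊢
    obtain ⟨n, hn, hyn⟩ := hy
    exact ⟨n, hkl.trans hn, hyn⟩
  have hΔsub : ∀ k, Δ k ⊆ Γk k := fun k y hy =>
    Set.mem_iUnion.2 ⟨k, Set.mem_iUnion.2 ⟨le_refl k, hy⟩⟩
  have hΓsub : ∀ k, (⋂ j, Γk j) ⊆ Γk k := fun k => Set.iInter_subset _ k
  have hΓkΩ : ∀ k, Γk k ∈ Ω := hΓk
  have hΓΩ : (⋂ k, Γk k) ∈ Ω := hΓ
  -- monotonicity of μ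
  have hμmono : ∀ s ∈ Ω, ∀ t ∈ Ω, s ⊆ t → μ s ≤ μ t := by
    intro s hs t ht hsub
    have h := pairAdd Ω μ hpos h0 hΩempty hadd s (t \ s) hs (hΩdiff t ht s hs)
      disjoint_sdiff_self_right
      (by rw [Set.union_diff_cancel hsub]; exact ht)
    rw [Set.union_diff_cancel hsub] at h
    rw [h]
    exact le_add_of_nonneg_right (hpos _ (hΩdiff t ht s hs))
  have hxΓk : ∀ k, (↑x : WithTop E) ≤ μ (Γk k) :=
    fun k => (hx k).trans (hμmono _ (hΔ k) _ (hΓkΩ k) (hΔsub k))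
  -- the disjoint annuli
  let D : ℕ → Set X := fun j => Γk j \ Γk (j + 1)
  have hDΩ : ∀ j, D j ∈ Ω := fun j => hΩdiff _ (hΓkΩ j) _ (hΓkΩ (j + 1))
  have hDdisj : ∀ m n, m ≠ n → Disjoint (D m) (D n) := by
    have key : ∀ m n, m < n → Disjoint (D m) (D n) := by
      intro m n hmn
      exact disjoint_sdiff_self_left.mono_right (Set.diff_subset.trans (hmono hmn))
    intro m n hmn
    rcases hmn.lt_or_gt with h | h
    · exact key m n h
    · exact (key n m h).symm
  have hDU : (⋃ j, D j) = Γk 0 \ ⋂ k, Γk k := by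
    apply subset_antisymm
    · refine Set.iUnion_subset fun j y hy => ?_
      obtain ⟨h1, h2⟩ := hy
      refine ⟨hmono (Nat.zero_le j) h1, fun hmem => h2 (Set.mem_iInter.1 hmem (j + 1))⟩
    · rintro y ⟨hy0, hyΓ⟩
      have hex : ∃ k, y ∉ Γk k := by
        by_contra hcon
        push_neg at hcon
        exact hyΓ (Set.mem_iInter.2 hcon)
      have hk0 := Nat.find_spec hex
      have hk0pos : Nat.find hex ≠ 0 := fun h => hk0 (h ▸ hy0)
      obtain ⟨j, hj⟩ := Nat.exists_eq_succ_of_ne_zero hk0pos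
      have hyj : y ∈ Γk j := not_not.1 (Nat.find_min hex (by omega))
      rw [hj] at hk0
      have hk0' : y ∉ Γk (j + 1) := hk0
      exact Set.mem_iUnion.2 ⟨j, hyj, hk0'⟩
  -- partial sums
  have hS : ∀ k, ∑ j ∈ Finset.range k, μ (D j) = μ (Γk 0 \ Γk k) := by
    intro k
    induction k with
    | zero => simp [Set.diff_self, h0]
    | succ k ih =>
      rw [Finset.sum_range_succ, ih]
      have hdecomp : (Γk 0 \ Γk k) ∪ D k = Γk 0 \ Γk (k + 1) :=
        Set.diff_union_diff_cancel (hmono (Nat.zero_le k)) (hmono (Nat.le_succ k))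
      have h := pairAdd Ω μ hpos h0 hΩempty hadd (Γk 0 \ Γk k) (D k)
        (hΩdiff _ (hΓkΩ 0) _ (hΓkΩ k)) (hDΩ k)
        (disjoint_sdiff_self_left.mono_right Set.diff_subset)
        (by rw [hdecomp]; exact hΩdiff _ (hΓkΩ 0) _ (hΓkΩ (k + 1)))
      rw [hdecomp] at h
      exact h.symm
  obtain ⟨e, he⟩ := hfin
  have hΓ0 : Γk 0 = ⋃ n, Δ n := by
    show (⋃ n, ⋃ (_ : 0 ≤ n), Δ n) = _
    simp [Nat.zero_le]
  have he' : μ (Γk 0 \ ⋂ k, Γk k) = (e : WithTop E) := by rw [hΓ0]; exact he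
  cases hg : μ (⋂ k, Γk k) with
  | top => exact le_top
  | coe g =>
    have hlub := hadd D hDΩ hDdisj (by rw [hDU]; exact hΩdiff _ (hΓkΩ 0) _ hΓΩ)
    rw [hDU, he'] at hlub
    have key : ∀ k, ∃ a : E, μ (Γk 0 \ Γk k) = (a : WithTop E) ∧ a ≤ g + e - x := by
      intro k
      have hdecomp : (Γk 0 \ Γk k) ∪ (Γk k \ ⋂ j, Γk j) = Γk 0 \ ⋂ j, Γk j :=
        Set.diff_union_diff_cancel (hmono (Nat.zero_le k)) (hΓsub k)
      have hsplit : μ (Γk 0 \ ⋂ j, Γk j)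
          = μ (Γk 0 \ Γk k) + μ (Γk k \ ⋂ j, Γk j) := by
        rw [← hdecomp]
        exact pairAdd Ω μ hpos h0 hΩempty hadd _ _
          (hΩdiff _ (hΓkΩ 0) _ (hΓkΩ k)) (hΩdiff _ (hΓkΩ k) _ hΓΩ)
          (disjoint_sdiff_self_left.mono_right Set.diff_subset)
          (by rw [hdecomp]; exact hΩdiff _ (hΓkΩ 0) _ hΓΩ)
      rw [he'] at hsplit
      obtain ⟨a, ha⟩ : ∃ a : E, μ (Γk 0 \ Γk k) = (a : WithTop E) := by
        cases hA : μ (Γk 0 \ Γk k) with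
        | top =>
          rw [hA, WithTop.top_add] at hsplit
          exact absurd hsplit WithTop.coe_ne_top
        | coe a => exact ⟨a, rfl⟩
      obtain ⟨b, hb⟩ : ∃ b : E, μ (Γk k \ ⋂ j, Γk j) = (b : WithTop E) := by
        cases hB : μ (Γk k \ ⋂ j, Γk j) with
        | top =>
          rw [hB, WithTop.add_top] at hsplit
          exact absurd hsplit WithTop.coe_ne_top
        | coe b => exact ⟨b, rfl⟩
      rw [ha, hb, ← WithTop.coe_add] at hsplit
      have heq : e = a + b := by exact_mod_cast hsplit
      have hΓkeq : μ (Γk k) = μ (⋂ j, Γk j) + μ (Γk k \ ⋂ j, Γk j) := by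
        have h := pairAdd Ω μ hpos h0 hΩempty hadd _ _ hΓΩ
          (hΩdiff _ (hΓkΩ k) _ hΓΩ) disjoint_sdiff_self_right
          (by rw [Set.union_diff_cancel (hΓsub k)]; exact hΓkΩ k)
        rwa [Set.union_diff_cancel (hΓsub k)] at h
      have hxk : (↑x : WithTop E) ≤ (↑(g + b) : WithTop E) := by
        have h := hxΓk k
        rwa [hΓkeq, hg, hb, ← WithTop.coe_add] at h
      have hxgb : x ≤ g + b := WithTop.coe_le_coe.1 hxk
      refine ⟨a, ha, ?_⟩
      rw [le_sub_iff_add_le, heq]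
      calc a + x ≤ a + (g + b) := add_le_add_right hxgb a
        _ = g + (a + b) := by abel
    have hub : (↑(g + e - x) : WithTop E) ∈
        upperBounds (Set.range fun N => ∑ n ∈ Finset.range N, μ (D n)) := by
      rintro y ⟨N, rfl⟩
      obtain ⟨a, ha, hale⟩ := key N
      show (∑ n ∈ Finset.range N, μ (D n)) ≤ (↑(g + e - x) : WithTop E)
      rw [hS N, ha]
      exact WithTop.coe_le_coe.2 hale
    have hle : (↑e : WithTop E) ≤ ↑(g + e - x) := hlub.2 hub
    have hle' : e ≤ g + e - x := WithTop.coe_le_coe.1 hle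
    have h1 : e + x ≤ g + e := le_sub_iff_add_le.1 hle'
    have h2 : x + e ≤ g + e := by rwa [add_comm e x] at h1
    have hxg : x ≤ g := le_of_add_le_add_right h2
    exact_mod_cast hxg
end

section
/- Let X be a set, E a σ-monotone complete partially ordered vector space, and μ* : P(X) → E̅⁺ an E̅⁺-valued outer measure. Then the collection M of μ*-measurable subsets of X (Carathéodory measurable sets) is a σ-algebra, and the restriction of μ* to M is an order-σ-additive E̅⁺-valued measure. -/
/-- The collection of Carathéodory-measurable sets for an `E̅⁺`-valued outer
measure `μ*`. -/
def CaratheodorySets {X E : Type*} [AddCommGroup E] [PartialOrder E] [IsOrderedAddMonoid E]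
    (μs : Set X → WithTop E) : Set (Set X) :=
  {Δ : Set X | ∀ Γ : Set X, μs Γ = μs (Γ ∩ Δ) + μs (Γ ∩ Δᶜ)}

section Aux

variable {X E : Type*} [AddCommGroup E] [PartialOrder E] [IsOrderedAddMonoid E]

/-- Partial unions of a sequence of sets. -/
def pU (Δ : ℕ → Set X) : ℕ → Set X
  | 0 => ∅
  | n + 1 => pU Δ n ∪ Δ n

lemma mem_pU {Δ : ℕ → Set X} {x : X} : ∀ {n : ℕ}, x ∈ pU Δ n ↔ ∃ k < n, x ∈ Δ k := by
  intro n
  induction n with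
  | zero => simp [pU]
  | succ n ih =>
    simp only [pU, Set.mem_union, ih, Nat.lt_succ_iff_lt_or_eq]
    constructor
    · rintro (⟨k, hk, hx⟩ | hx)
      · exact ⟨k, Or.inl hk, hx⟩
      · exact ⟨n, Or.inr rfl, hx⟩
    · rintro ⟨k, (hk | rfl), hx⟩
      · exact Or.inl ⟨k, hk, hx⟩
      · exact Or.inr hx

lemma pU_subset_iUnion {Δ : ℕ → Set X} {n : ℕ} : pU Δ n ⊆ ⋃ k, Δ k := by
  intro x hx
  obtain ⟨k, _, hxk⟩ := mem_pU.1 hx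
  exact Set.mem_iUnion.2 ⟨k, hxk⟩

lemma subset_pU {Δ : ℕ → Set X} {m n : ℕ} (h : m < n) : Δ m ⊆ pU Δ n :=
  fun x hx => mem_pU.2 ⟨m, h, hx⟩

lemma partial_sum_mono {f : ℕ → WithTop E} (hf : ∀ n, 0 ≤ f n) :
    Monotone fun N => ∑ n ∈ Finset.range N, f n :=
  monotone_nat_of_le_succ fun N => by
    rw [Finset.sum_range_succ]; exact le_add_of_nonneg_right (hf N)

lemma exists_isLUB_monotone
    (hσ : ∀ a : ℕ → E, Monotone a → BddAbove (Set.range a) → ∃ s, IsLUB (Set.range a) s)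
    (a : ℕ → WithTop E) (ha : Monotone a) : ∃ c, IsLUB (Set.range a) c := by
  by_cases h : ∀ n, a n ≠ ⊤
  · set a' : ℕ → E := fun n => (a n).untop (h n) with ha'
    have hcoe : ∀ n, (a' n : WithTop E) = a n := fun n => WithTop.coe_untop _ _
    have hmono' : Monotone a' := fun m n hmn => by
      rw [← WithTop.coe_le_coe, hcoe, hcoe]; exact ha hmn
    by_cases hb : BddAbove (Set.range a')
    · obtain ⟨s, hs⟩ := hσ a' hmono' hb
      refine ⟨↑s, ?_, ?_⟩
      · rintro _ ⟨n, rfl⟩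
        rw [← hcoe]; exact WithTop.coe_le_coe.2 (hs.1 ⟨n, rfl⟩)
      · intro c hc
        cases c with
        | top => exact le_top
        | coe x =>
          refine WithTop.coe_le_coe.2 (hs.2 ?_)
          rintro _ ⟨n, rfl⟩
          exact WithTop.coe_le_coe.1 (by rw [hcoe]; exact hc ⟨n, rfl⟩)
    · refine ⟨⊤, fun _ _ => le_top, ?_⟩
      intro c hc
      cases c with
      | top => exact le_rfl
      | coe x =>
        refine absurd ⟨x, ?_⟩ hb
        rintro _ ⟨n, rfl⟩
        exact WithTop.coe_le_coe.1 (by rw [hcoe]; exact hc ⟨n, rfl⟩)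
  · push_neg at h
    obtain ⟨n, hn⟩ := h
    refine ⟨⊤, fun _ _ => le_top, fun c hc => ?_⟩
    have := hc ⟨n, rfl⟩
    rw [hn] at this
    exact this

lemma isLUB_add_le {a : ℕ → WithTop E} {c d m : WithTop E}
    (hc : IsLUB (Set.range a) c) (h : ∀ n, a n + d ≤ m) : c + d ≤ m := by
  cases d with
  | top =>
    have h0 := h 0
    rw [WithTop.add_top] at h0
    rw [top_le_iff.1 h0]
    exact le_top
  | coe d' =>
    cases m with
    | top => exact le_top
    | coe m' =>
      have key : ∀ n, a n ≤ ↑(m' - d') := by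
        intro n
        cases han : a n with
        | top =>
          exfalso
          have := h n
          rw [han, WithTop.top_add] at this
          exact absurd this (by simp)
        | coe x =>
          have := h n
          rw [han, ← WithTop.coe_add, WithTop.coe_le_coe] at this
          exact WithTop.coe_le_coe.2 (le_sub_iff_add_le.2 this)
      have hcle : c ≤ ↑(m' - d') := hc.2 (by rintro _ ⟨n, rfl⟩; exact key n)
      calc c + ↑d' ≤ ↑(m' - d') + ↑d' := add_le_add_left hcle _
        _ = ↑m' := by rw [← WithTop.coe_add, sub_add_cancel]

end Aux

section Meas

variable {X E : Type*} [AddCommGroup E] [PartialOrder E] [IsOrderedAddMonoid E] (μs : Set X → WithTop E)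

lemma Cara.empty_mem (h0 : μs ∅ = 0) : ∅ ∈ CaratheodorySets μs := by
  intro Γ
  rw [Set.inter_empty, Set.compl_empty, Set.inter_univ, h0, zero_add]

lemma Cara.compl_mem {s : Set X} (hs : s ∈ CaratheodorySets μs) :
    sᶜ ∈ CaratheodorySets μs := by
  intro Γ
  rw [compl_compl, add_comm]
  exact hs Γ

lemma Cara.union_mem {s t : Set X} (hs : s ∈ CaratheodorySets μs)
    (ht : t ∈ CaratheodorySets μs) : s ∪ t ∈ CaratheodorySets μs := by
  intro Γ
  have h1 := hs Γ
  have h2 := ht (Γ ∩ sᶜ)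
  have h3 := hs (Γ ∩ (s ∪ t))
  have e1 : Γ ∩ (s ∪ t) ∩ s = Γ ∩ s := by
    ext x; simp only [Set.mem_inter_iff, Set.mem_union]; tauto
  have e2 : Γ ∩ (s ∪ t) ∩ sᶜ = Γ ∩ sᶜ ∩ t := by
    ext x; simp only [Set.mem_inter_iff, Set.mem_union, Set.mem_compl_iff]; tauto
  have e3 : Γ ∩ sᶜ ∩ tᶜ = Γ ∩ (s ∪ t)ᶜ := by
    ext x; simp only [Set.mem_inter_iff, Set.mem_union, Set.mem_compl_iff]; tauto
  rw [e1, e2] at h3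
  rw [h1, h2, e3, h3, add_assoc]

lemma Cara.inter_mem {s t : Set X} (hs : s ∈ CaratheodorySets μs)
    (ht : t ∈ CaratheodorySets μs) : s ∩ t ∈ CaratheodorySets μs := by
  have := Cara.compl_mem μs
    (Cara.union_mem μs (Cara.compl_mem μs hs) (Cara.compl_mem μs ht))
  rwa [Set.compl_union, compl_compl, compl_compl] at this

lemma Cara.pU_mem (h0 : μs ∅ = 0) {Δ : ℕ → Set X}
    (hΔ : ∀ n, Δ n ∈ CaratheodorySets μs) (n : ℕ) : pU Δ n ∈ CaratheodorySets μs := by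
  induction n with
  | zero => exact Cara.empty_mem μs h0
  | succ n ih => exact Cara.union_mem μs ih (hΔ n)

lemma Cara.mu_union_le (h0 : μs ∅ = 0) (hpos : ∀ s : Set X, 0 ≤ μs s)
    (hsub : ∀ Δ : ℕ → Set X, ∀ b : WithTop E,
      IsLUB (Set.range fun N => ∑ n ∈ Finset.range N, μs (Δ n)) b →
        μs (⋃ n, Δ n) ≤ b) (s t : Set X) : μs (s ∪ t) ≤ μs s + μs t := by
  set Δ : ℕ → Set X := fun n => match n with | 0 => s | 1 => t | _ => ∅ with hΔ
  have hU : (⋃ n, Δ n) = s ∪ t := by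
    apply le_antisymm
    · refine Set.iUnion_subset fun n => ?_
      match n with
      | 0 => exact Set.subset_union_left
      | 1 => exact Set.subset_union_right
      | (n + 2) => exact Set.empty_subset _
    · refine Set.union_subset ?_ ?_
      · exact Set.subset_iUnion Δ 0
      · exact Set.subset_iUnion Δ 1
  set P : ℕ → WithTop E := fun N => ∑ n ∈ Finset.range N, μs (Δ n) with hP
  have h2 : P 2 = μs s + μs t := by
    simp [hP, Finset.sum_range_succ]; rfl
  have hconst : ∀ N, 2 ≤ N → P N = μs s + μs t := by
    intro N hN
    induction N with
    | zero => omega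
    | succ N ih =>
      rcases Nat.lt_or_ge N 2 with h | h
      · interval_cases N
        · omega
        · exact h2
      · have hΔN : Δ N = ∅ := by
          match N, h with
          | (n + 2), _ => rfl
        rw [hP]
        simp only
        rw [Finset.sum_range_succ, hΔN, h0, add_zero]
        exact ih h
  have hub : ∀ N, P N ≤ μs s + μs t := by
    intro N
    rcases Nat.lt_or_ge N 2 with h | h
    · calc P N ≤ P 2 := partial_sum_mono (fun n => hpos _) (by omega)
        _ = _ := h2
    · exact le_of_eq (hconst N h)
  have hlub : IsLUB (Set.range P) (μs s + μs t) := by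
    constructor
    · rintro _ ⟨N, rfl⟩; exact hub N
    · intro c hc
      exact h2 ▸ hc ⟨2, rfl⟩
  have := hsub Δ _ hlub
  rwa [hU] at this

end Meas

section Meas2

variable {X E : Type*} [AddCommGroup E] [PartialOrder E] [IsOrderedAddMonoid E] (μs : Set X → WithTop E)

lemma Cara.fin_add (h0 : μs ∅ = 0) {B : ℕ → Set X}
    (hB : ∀ n, B n ∈ CaratheodorySets μs)
    (hd : ∀ m n, m ≠ n → Disjoint (B m) (B n)) (Γ : Set X) :
    ∀ N : ℕ, μs (Γ ∩ pU B N) = ∑ n ∈ Finset.range N, μs (Γ ∩ B n) := by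
  intro N
  induction N with
  | zero => simp [pU, h0]
  | succ N ih =>
    have h := hB N (Γ ∩ pU B (N + 1))
    have epU : pU B (N + 1) = pU B N ∪ B N := rfl
    have hdisj : pU B N ⊆ (B N)ᶜ := by
      intro x hx
      obtain ⟨k, hk, hxk⟩ := mem_pU.1 hx
      exact Set.disjoint_left.1 (hd k N hk.ne) hxk
    have e1 : Γ ∩ pU B (N + 1) ∩ B N = Γ ∩ B N := by
      rw [epU]; ext x
      simp only [Set.mem_inter_iff, Set.mem_union]; tauto
    have e2 : Γ ∩ pU B (N + 1) ∩ (B N)ᶜ = Γ ∩ pU B N := by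
      rw [epU]; ext x
      constructor
      · rintro ⟨⟨hΓ, hu | hu⟩, hc⟩
        · exact ⟨hΓ, hu⟩
        · exact absurd hu hc
      · rintro ⟨hΓ, hu⟩
        exact ⟨⟨hΓ, Or.inl hu⟩, hdisj hu⟩
    rw [e1, e2, ih] at h
    rw [Finset.sum_range_succ, h, add_comm]

lemma Cara.disjoint_iUnion_mem
    (hσ : ∀ a : ℕ → E, Monotone a → BddAbove (Set.range a) → ∃ s, IsLUB (Set.range a) s)
    (h0 : μs ∅ = 0) (hpos : ∀ s : Set X, 0 ≤ μs s)
    (hmono : ∀ s t : Set X, s ⊆ t → μs s ≤ μs t)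
    (hsub : ∀ Δ : ℕ → Set X, ∀ b : WithTop E,
      IsLUB (Set.range fun N => ∑ n ∈ Finset.range N, μs (Δ n)) b →
        μs (⋃ n, Δ n) ≤ b)
    {B : ℕ → Set X} (hB : ∀ n, B n ∈ CaratheodorySets μs)
    (hd : ∀ m n, m ≠ n → Disjoint (B m) (B n)) :
    (⋃ n, B n) ∈ CaratheodorySets μs := by
  intro Γ
  set U : Set X := ⋃ n, B n with hUdef
  obtain ⟨c, hc⟩ := exists_isLUB_monotone hσ
    (fun N => ∑ n ∈ Finset.range N, μs (Γ ∩ B n))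
    (partial_sum_mono fun n => hpos _)
  have hμU_le : μs (Γ ∩ U) ≤ c := by
    have := hsub (fun n => Γ ∩ B n) c hc
    rwa [← Set.inter_iUnion] at this
  have hN : ∀ N, (∑ n ∈ Finset.range N, μs (Γ ∩ B n)) + μs (Γ ∩ Uᶜ) ≤ μs Γ := by
    intro N
    have hm := Cara.pU_mem μs h0 hB N Γ
    rw [Cara.fin_add μs h0 hB hd Γ N] at hm
    have hle : μs (Γ ∩ Uᶜ) ≤ μs (Γ ∩ (pU B N)ᶜ) :=
      hmono _ _ (Set.inter_subset_inter_right _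
        (Set.compl_subset_compl.2 pU_subset_iUnion))
    calc (∑ n ∈ Finset.range N, μs (Γ ∩ B n)) + μs (Γ ∩ Uᶜ)
        ≤ (∑ n ∈ Finset.range N, μs (Γ ∩ B n)) + μs (Γ ∩ (pU B N)ᶜ) :=
          add_le_add_right hle _
      _ = μs Γ := hm.symm
  have hcle : c + μs (Γ ∩ Uᶜ) ≤ μs Γ := isLUB_add_le hc hN
  apply le_antisymm
  · have : μs Γ = μs ((Γ ∩ U) ∪ (Γ ∩ Uᶜ)) := by rw [Set.inter_union_compl]
    rw [this]
    exact Cara.mu_union_le μs h0 hpos hsub _ _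
  · calc μs (Γ ∩ U) + μs (Γ ∩ Uᶜ) ≤ c + μs (Γ ∩ Uᶜ) := add_le_add_left hμU_le _
      _ ≤ μs Γ := hcle

end Meas2

/-- For an `E̅⁺`-valued outer measure `μ*` on a set `X` (with `E` σ-monotone
complete), the collection of `μ*`-measurable (Carathéodory) sets is a σ-algebra,
and the restriction of `μ*` to it is order-σ-additive. -/
theorem caratheodory_measurable_sets_sigma_algebra_and_measure
    {X : Type*} {E : Type*} [AddCommGroup E] [PartialOrder E] [IsOrderedAddMonoid E] [Module ℝ E]
    [PosSMulStrictMono ℝ E] [PosSMulReflectLT ℝ E]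
    (hσ : ∀ a : ℕ → E, Monotone a → BddAbove (Set.range a) → ∃ s, IsLUB (Set.range a) s)
    (μs : Set X → WithTop E)
    (h0 : μs ∅ = 0) (hpos : ∀ s : Set X, 0 ≤ μs s)
    (hmono : ∀ s t : Set X, s ⊆ t → μs s ≤ μs t)
    (hsub : ∀ Δ : ℕ → Set X, ∀ b : WithTop E,
      IsLUB (Set.range fun N => ∑ n ∈ Finset.range N, μs (Δ n)) b →
        μs (⋃ n, Δ n) ≤ b) :
    (∅ ∈ CaratheodorySets μs) ∧
    (∀ s ∈ CaratheodorySets μs, sᶜ ∈ CaratheodorySets μs) ∧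
    (∀ Δ : ℕ → Set X, (∀ n, Δ n ∈ CaratheodorySets μs) →
      (⋃ n, Δ n) ∈ CaratheodorySets μs) ∧
    (∀ Δ : ℕ → Set X, (∀ n, Δ n ∈ CaratheodorySets μs) →
      (∀ m n, m ≠ n → Disjoint (Δ m) (Δ n)) →
      IsLUB (Set.range fun N => ∑ n ∈ Finset.range N, μs (Δ n)) (μs (⋃ n, Δ n))) := by
  refine ⟨Cara.empty_mem μs h0, fun s hs => Cara.compl_mem μs hs, ?_, ?_⟩
  · -- general countable unions via disjointification
    intro Δ hΔ
    set B : ℕ → Set X := fun n => Δ n ∩ (pU Δ n)ᶜ with hBdef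
    have hBmem : ∀ n, B n ∈ CaratheodorySets μs := fun n =>
      Cara.inter_mem μs (hΔ n) (Cara.compl_mem μs (Cara.pU_mem μs h0 hΔ n))
    have hBd : ∀ m n, m ≠ n → Disjoint (B m) (B n) := by
      have key : ∀ m n, m < n → Disjoint (B m) (B n) := by
        intro m n hmn
        rw [Set.disjoint_left]
        rintro x ⟨hxm, _⟩ ⟨_, hxc⟩
        exact hxc (subset_pU hmn hxm)
      intro m n hmn
      rcases hmn.lt_or_gt with h | h
      · exact key m n h
      · exact (key n m h).symm
    have hUeq : (⋃ n, B n) = ⋃ n, Δ n := by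
      apply le_antisymm
      · exact Set.iUnion_subset fun n => Set.inter_subset_left.trans (Set.subset_iUnion Δ n)
      · intro x hx
        classical
        have hex : ∃ n, x ∈ Δ n := Set.mem_iUnion.1 hx
        refine Set.mem_iUnion.2 ⟨Nat.find hex, Nat.find_spec hex, ?_⟩
        intro hxp
        obtain ⟨k, hk, hxk⟩ := mem_pU.1 hxp
        exact Nat.find_min hex hk hxk
    rw [← hUeq]
    exact Cara.disjoint_iUnion_mem μs hσ h0 hpos hmono hsub hBmem hBd
  · -- σ-additivity on disjoint measurable families
    intro Δ hΔ hd
    obtain ⟨c, hc⟩ := exists_isLUB_monotone hσ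
      (fun N => ∑ n ∈ Finset.range N, μs (Δ n))
      (partial_sum_mono fun n => hpos _)
    have h1 : μs (⋃ n, Δ n) ≤ c := hsub Δ c hc
    have h2 : c ≤ μs (⋃ n, Δ n) := by
      refine hc.2 ?_
      rintro _ ⟨N, rfl⟩
      have heq := Cara.fin_add μs h0 hΔ hd Set.univ N
      simp only [Set.univ_inter] at heq
      show (∑ n ∈ Finset.range N, μs (Δ n)) ≤ _
      rw [← heq]
      exact hmono _ _ pU_subset_iUnion
    have : c = μs (⋃ n, Δ n) := le_antisymm h2 h1
    rwa [this] at hc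
end

section
/- Key approximation lemma: Let (X, Ω, μ, E) be a measure space with Ω a σ-algebra. Let φ be a nonnegative elementary (finite-valued simple measurable) function and (φ_n) an increasing sequence of nonnegative elementary functions with φ ≤ sup_n φ_n pointwise in [0,∞]. Then the order integral of φ satisfies ∫ᵒ φ dμ ≤ ⋁_{n≥1} ∫ᵒ φ_n dμ in E̅. -/
open MeasureTheory

/-- The action of `ℝ⁺` (as `ℝ≥0`) on `E̅⁺ ⊆ WithTop E`: `r • ∞ = ∞` for
`r > 0` and `0 • ∞ = 0`. -/
noncomputable def eSMul {E : Type*} [AddCommGroup E] [Module ℝ E]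
    (r : NNReal) (x : WithTop E) : WithTop E :=
  if r = 0 then 0 else x.map fun e => (r : ℝ) • e

/-- The order integral of a nonnegative elementary (finite-valued simple
measurable) function with respect to a set map `μ : Ω → E̅⁺`. -/
noncomputable def elemOInt {X : Type*} [MeasurableSpace X]
    {E : Type*} [AddCommGroup E] [Module ℝ E]
    (μ : Set X → WithTop E) (φ : SimpleFunc X NNReal) : WithTop E :=
  ∑ r ∈ φ.range, eSMul r (μ (⇑φ ⁻¹' {r}))

/-- `μ : Ω → E̅⁺` is an order-σ-additive `E̅⁺`-valued measure on the σ-algebra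
of measurable sets. -/
def IsOMeasure {X : Type*} [MeasurableSpace X]
    {E : Type*} [AddCommGroup E] [PartialOrder E] (μ : Set X → WithTop E) : Prop :=
  μ ∅ = 0 ∧ (∀ s : Set X, MeasurableSet s → 0 ≤ μ s) ∧
  ∀ Δ : ℕ → Set X, (∀ n, MeasurableSet (Δ n)) →
    (∀ m n, m ≠ n → Disjoint (Δ m) (Δ n)) →
    IsLUB (Set.range fun N => ∑ n ∈ Finset.range N, μ (Δ n)) (μ (⋃ n, Δ n))

set_option linter.unusedSectionVars false

section eSMul
variable {E : Type*} [AddCommGroup E] [PartialOrder E] [IsOrderedAddMonoid E] [Module ℝ E] [PosSMulStrictMono ℝ E] [PosSMulReflectLT ℝ E]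

lemma eSMul_zero_left (x : WithTop E) : eSMul 0 x = 0 := if_pos rfl

lemma eSMul_zero_right (r : NNReal) : eSMul r (0 : WithTop E) = 0 := by
  unfold eSMul
  split
  · rfl
  · show WithTop.map _ ((0 : E) : WithTop E) = _
    rw [WithTop.map_coe, smul_zero]; rfl

lemma eSMul_coe (r : NNReal) (hr : r ≠ 0) (e : E) :
    eSMul r (e : WithTop E) = ((r : ℝ) • e : E) := by
  unfold eSMul; rw [if_neg hr]; exact WithTop.map_coe _ _

lemma eSMul_top (r : NNReal) (hr : r ≠ 0) : eSMul r (⊤ : WithTop E) = ⊤ := by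
  unfold eSMul; rw [if_neg hr]; rfl

lemma eSMul_add (r : NNReal) (x y : WithTop E) :
    eSMul r (x + y) = eSMul r x + eSMul r y := by
  rcases eq_or_ne r 0 with rfl | hr
  · simp [eSMul_zero_left]
  · induction x using WithTop.recTopCoe with
    | top => simp [eSMul_top _ hr, top_add]
    | coe e =>
      induction y using WithTop.recTopCoe with
      | top => simp [eSMul_top _ hr, add_top, eSMul_coe _ hr]
      | coe f =>
        rw [← WithTop.coe_add, eSMul_coe _ hr, eSMul_coe _ hr, eSMul_coe _ hr,
          ← WithTop.coe_add, smul_add]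

lemma eSMul_mono_right (r : NNReal) {x y : WithTop E} (h : x ≤ y) :
    eSMul r x ≤ eSMul r y := by
  rcases eq_or_ne r 0 with rfl | hr
  · simp [eSMul_zero_left]
  · induction y using WithTop.recTopCoe with
    | top => rw [eSMul_top _ hr]; exact le_top
    | coe f =>
      induction x using WithTop.recTopCoe with
      | top => exact absurd h (by simp)
      | coe e =>
        rw [eSMul_coe _ hr, eSMul_coe _ hr, WithTop.coe_le_coe]
        exact smul_le_smul_of_nonneg_left (WithTop.coe_le_coe.mp h) r.coe_nonneg

lemma eSMul_nonneg (r : NNReal) {x : WithTop E} (hx : 0 ≤ x) : 0 ≤ eSMul r x := by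
  simpa [eSMul_zero_right] using eSMul_mono_right r hx

lemma eSMul_mono_left {r s : NNReal} (h : r ≤ s) {x : WithTop E} (hx : 0 ≤ x) :
    eSMul r x ≤ eSMul s x := by
  rcases eq_or_ne r 0 with rfl | hr
  · rw [eSMul_zero_left]; exact eSMul_nonneg s hx
  · have hs : s ≠ 0 := fun hs => hr (le_antisymm (hs ▸ h) r.2)
    induction x using WithTop.recTopCoe with
    | top => rw [eSMul_top _ hs]; exact le_top
    | coe e =>
      rw [eSMul_coe _ hr, eSMul_coe _ hs, WithTop.coe_le_coe]
      have he : (0 : E) ≤ e := by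
        rw [← WithTop.coe_le_coe]; exact_mod_cast hx
      exact smul_le_smul_of_nonneg_right (by exact_mod_cast h) he

lemma eSMul_mul (r s : NNReal) (x : WithTop E) :
    eSMul (r * s) x = eSMul r (eSMul s x) := by
  rcases eq_or_ne r 0 with rfl | hr
  · simp [eSMul_zero_left]
  rcases eq_or_ne s 0 with rfl | hs
  · simp [eSMul_zero_left, eSMul_zero_right]
  have hrs : r * s ≠ 0 := mul_ne_zero hr hs
  induction x using WithTop.recTopCoe with
  | top => rw [eSMul_top _ hs, eSMul_top _ hr, eSMul_top _ hrs]
  | coe e =>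
    rw [eSMul_coe _ hs, eSMul_coe _ hr, eSMul_coe _ hrs, NNReal.coe_mul, mul_smul]

lemma eSMul_one (x : WithTop E) : eSMul 1 x = x := by
  induction x using WithTop.recTopCoe with
  | top => exact eSMul_top _ one_ne_zero
  | coe e => rw [eSMul_coe _ one_ne_zero]; norm_num

lemma eSMul_sum {ι : Type*} (r : NNReal) (s : Finset ι) (f : ι → WithTop E) :
    eSMul r (∑ i ∈ s, f i) = ∑ i ∈ s, eSMul r (f i) := by
  classical
  induction s using Finset.induction with
  | empty => simp [eSMul_zero_right]
  | insert _ _ h ih => rw [Finset.sum_insert h, Finset.sum_insert h, eSMul_add, ih]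

lemma eSMul_isLUB (r : NNReal) {f : ℕ → WithTop E} {a : WithTop E}
    (ha : IsLUB (Set.range f) a) :
    IsLUB (Set.range fun n => eSMul r (f n)) (eSMul r a) := by
  rcases eq_or_ne r 0 with rfl | hr
  · simp only [eSMul_zero_left]
    rw [Set.range_const]
    exact isLUB_singleton
  constructor
  · rintro _ ⟨n, rfl⟩
    exact eSMul_mono_right r (ha.1 ⟨n, rfl⟩)
  · intro m hm
    have h1 : a ≤ eSMul r⁻¹ m := by
      apply ha.2
      rintro _ ⟨n, rfl⟩
      have := eSMul_mono_right r⁻¹ (hm ⟨n, rfl⟩)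
      rwa [← eSMul_mul, inv_mul_cancel₀ hr, eSMul_one] at this
    have := eSMul_mono_right r h1
    rwa [← eSMul_mul, mul_inv_cancel₀ hr, eSMul_one] at this

end eSMul

section mu
variable {X : Type*} [MeasurableSpace X] {E : Type*} [AddCommGroup E] [PartialOrder E] [IsOrderedAddMonoid E]
  {μ : Set X → WithTop E} (hμ : IsOMeasure μ)
include hμ

lemma omeas_add2 (s t : Set X) (hs : MeasurableSet s) (ht : MeasurableSet t)
    (hst : Disjoint s t) : μ (s ∪ t) = μ s + μ t := by
  classical
  set Δ : ℕ → Set X := fun n => if n = 0 then s else if n = 1 then t else ∅ with hΔ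
  have hmeas : ∀ n, MeasurableSet (Δ n) := by
    intro n; simp only [hΔ]; split
    · exact hs
    · split
      · exact ht
      · exact MeasurableSet.empty
  have h0 : Δ 0 = s := rfl
  have h1 : Δ 1 = t := rfl
  have h2 : ∀ k, Δ (k + 2) = ∅ := fun k => rfl
  have hdisj : ∀ m n, m ≠ n → Disjoint (Δ m) (Δ n) := by
    intro m n hmn
    rcases m with _ | _ | m <;> rcases n with _ | _ | n <;>
      first
      | exact absurd rfl hmn
      | exact hst
      | exact hst.symm
      | exact Set.disjoint_empty _
      | exact Set.empty_disjoint _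
  have hU : (⋃ n, Δ n) = s ∪ t := by
    apply subset_antisymm
    · apply Set.iUnion_subset; intro n
      simp only [hΔ]
      split
      · exact Set.subset_union_left
      · split
        · exact Set.subset_union_right
        · exact Set.empty_subset _
    · apply Set.union_subset
      · exact Set.subset_iUnion_of_subset 0 (by simp [hΔ])
      · exact Set.subset_iUnion_of_subset 1 (by simp [hΔ])
  have hlub := hμ.2.2 Δ hmeas hdisj
  rw [hU] at hlub
  have hP2 : ∀ N, ∑ n ∈ Finset.range (N + 2), μ (Δ n) = μ s + μ t := by
    intro N
    induction N with
    | zero => rw [Finset.sum_range_succ, Finset.sum_range_one, h0, h1]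
    | succ k ih =>
      rw [show k + 1 + 2 = (k + 2) + 1 from rfl, Finset.sum_range_succ, ih, h2, hμ.1, add_zero]
  have hPmono : Monotone fun N => ∑ n ∈ Finset.range N, μ (Δ n) := by
    apply monotone_nat_of_le_succ
    intro n
    simp only [Finset.sum_range_succ]
    exact le_add_of_nonneg_right (hμ.2.1 _ (hmeas n))
  have hgreat : IsGreatest (Set.range fun N => ∑ n ∈ Finset.range N, μ (Δ n)) (μ s + μ t) := by
    constructor
    · exact ⟨2, hP2 0⟩
    · rintro _ ⟨N, rfl⟩
      rcases le_or_gt N 2 with h | h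
      · exact le_trans (hPmono h) (le_of_eq (hP2 0))
      · obtain ⟨k, rfl⟩ : ∃ k, N = k + 2 := ⟨N - 2, by omega⟩
        exact le_of_eq (hP2 k)
  exact hlub.unique hgreat.isLUB

lemma omeas_mono {s t : Set X} (hs : MeasurableSet s) (ht : MeasurableSet t)
    (hst : s ⊆ t) : μ s ≤ μ t := by
  have : t = s ∪ (t \ s) := by rw [Set.union_diff_cancel hst]
  rw [this, omeas_add2 hμ s (t \ s) hs (ht.diff hs) Set.disjoint_sdiff_right]
  exact le_add_of_nonneg_right (hμ.2.1 _ (ht.diff hs))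

lemma omeas_biUnion {ι : Type*} (s : Finset ι) (B : ι → Set X)
    (hmeas : ∀ i, MeasurableSet (B i))
    (hdisj : ∀ i ∈ s, ∀ j ∈ s, i ≠ j → Disjoint (B i) (B j)) :
    μ (⋃ i ∈ s, B i) = ∑ i ∈ s, μ (B i) := by
  classical
  induction s using Finset.induction with
  | empty => simpa using hμ.1
  | @insert a s ha ih =>
    have h1 : (⋃ i ∈ insert a s, B i) = B a ∪ ⋃ i ∈ s, B i := by
      simp [Set.biUnion_insert]
    have hmb : MeasurableSet (⋃ i ∈ s, B i) :=
      s.measurableSet_biUnion fun i _ => hmeas i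
    have hadd := omeas_add2 hμ (B a) (⋃ i ∈ s, B i) (hmeas a) hmb ?_
    · rw [h1, hadd, Finset.sum_insert ha,
        ih fun i hi j hj hij => hdisj i (Finset.mem_insert_of_mem hi) j
          (Finset.mem_insert_of_mem hj) hij]
    rw [Set.disjoint_iUnion_right]
    intro i
    rw [Set.disjoint_iUnion_right]
    intro hi
    exact hdisj a (Finset.mem_insert_self a s) i (Finset.mem_insert_of_mem hi)
      (fun h => ha (h ▸ hi))

lemma omeas_cont_below (C : ℕ → Set X) (hC : Monotone C)
    (hmeas : ∀ n, MeasurableSet (C n)) :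
    IsLUB (Set.range fun n => μ (C n)) (μ (⋃ n, C n)) := by
  classical
  have hdmeas : ∀ n, MeasurableSet (disjointed C n) :=
    MeasurableSet.disjointed hmeas
  have hdisj := disjoint_disjointed C
  have hlub := hμ.2.2 (disjointed C) hdmeas fun m n h => hdisj h
  rw [iUnion_disjointed] at hlub
  have hpart : ∀ N, ∑ n ∈ Finset.range (N + 1), μ (disjointed C n) = μ (C N) := by
    intro N
    rw [← omeas_biUnion hμ _ _ hdmeas
      (fun i _ j _ hij => hdisj hij)]
    congr 1
    have : (⋃ i ∈ Finset.range (N + 1), disjointed C i) = partialSups (disjointed C) N := by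
      rw [partialSups_eq_biSup]
      ext x
      simp [Finset.mem_range, Nat.lt_succ_iff]
    rw [this, partialSups_disjointed, hC.partialSups_eq]
  constructor
  · rintro _ ⟨n, rfl⟩
    show μ (C n) ≤ μ (⋃ n, C n)
    rw [← hpart n]
    exact hlub.1 ⟨n + 1, rfl⟩
  · intro m hm
    apply hlub.2
    rintro _ ⟨N, rfl⟩
    cases N with
    | zero =>
      show (∑ n ∈ Finset.range 0, μ (disjointed C n)) ≤ m
      simp only [Finset.range_zero, Finset.sum_empty]
      calc (0 : WithTop E) ≤ μ (C 0) := hμ.2.1 _ (hmeas 0)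
        _ ≤ m := hm ⟨0, rfl⟩
    | succ k =>
      show (∑ n ∈ Finset.range (k + 1), μ (disjointed C n)) ≤ m
      rw [hpart k]
      exact hm ⟨k, rfl⟩

end mu

section lub
variable {E : Type*} [AddCommGroup E] [PartialOrder E] [IsOrderedAddMonoid E]

lemma isLUB_add_mono {f g : ℕ → WithTop E} (hf : Monotone f) (hg : Monotone g)
    {a b : WithTop E} (ha : IsLUB (Set.range f) a) (hb : IsLUB (Set.range g) b) :
    IsLUB (Set.range fun n => f n + g n) (a + b) := by
  constructor
  · rintro _ ⟨n, rfl⟩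
    exact add_le_add (ha.1 ⟨n, rfl⟩) (hb.1 ⟨n, rfl⟩)
  · intro m hm
    induction m using WithTop.recTopCoe with
    | top => exact le_top
    | coe m' =>
      by_cases hft : ∃ n, f n = ⊤
      · obtain ⟨n, hn⟩ := hft
        have := hm ⟨n, rfl⟩
        simp only [hn, top_add] at this
        exact absurd this (by simp)
      by_cases hgt : ∃ n, g n = ⊤
      · obtain ⟨n, hn⟩ := hgt
        have := hm ⟨n, rfl⟩
        simp only [hn, add_top] at this
        exact absurd this (by simp)
      push_neg at hft hgt
      set f' : ℕ → E := fun n => (f n).untop (hft n) with hf'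
      set g' : ℕ → E := fun n => (g n).untop (hgt n) with hg'
      have hfc : ∀ n, f n = (f' n : WithTop E) := fun n => (WithTop.coe_untop _ _).symm
      have hgc : ∀ n, g n = (g' n : WithTop E) := fun n => (WithTop.coe_untop _ _).symm
      have hub : ∀ n k, f' n + g' k ≤ m' := by
        intro n k
        have h1 : f n + g k ≤ f (max n k) + g (max n k) :=
          add_le_add (hf (le_max_left n k)) (hg (le_max_right n k))
        have h2 := le_trans h1 (hm ⟨max n k, rfl⟩)
        rw [hfc, hgc, ← WithTop.coe_add, WithTop.coe_le_coe] at h2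
        exact h2
      -- a and b are finite
      have hfa : ∀ n, f' n ≤ m' - g' 0 := fun n => le_sub_iff_add_le.mpr (hub n 0)
      have ha' : a ≤ ((m' - g' 0 : E) : WithTop E) := by
        apply ha.2
        rintro _ ⟨n, rfl⟩
        rw [hfc n, WithTop.coe_le_coe]
        exact hfa n
      obtain ⟨a', rfl⟩ : ∃ a' : E, a = (a' : WithTop E) :=
        ⟨a.untop (by rintro rfl; exact absurd ha' (by simp)), (WithTop.coe_untop _ _).symm⟩
      have hgb : ∀ k, g' k ≤ m' - f' 0 := fun k =>
        le_sub_iff_add_le.mpr (by rw [add_comm]; exact hub 0 k)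
      have hb' : b ≤ ((m' - f' 0 : E) : WithTop E) := by
        apply hb.2
        rintro _ ⟨k, rfl⟩
        rw [hgc k, WithTop.coe_le_coe]
        exact hgb k
      obtain ⟨b', rfl⟩ : ∃ b' : E, b = (b' : WithTop E) :=
        ⟨b.untop (by rintro rfl; exact absurd hb' (by simp)), (WithTop.coe_untop _ _).symm⟩
      -- transfer to E
      rw [← WithTop.coe_add, WithTop.coe_le_coe]
      have hbn : ∀ n, b' ≤ m' - f' n := by
        intro n
        have : ((m' - f' n : E) : WithTop E) ∈ upperBounds (Set.range g) := by
          rintro _ ⟨k, rfl⟩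
          rw [hgc k, WithTop.coe_le_coe]
          exact le_sub_iff_add_le.mpr (by rw [add_comm]; exact hub n k)
        exact WithTop.coe_le_coe.mp (hb.2 this)
      have han : a' ≤ m' - b' := by
        have : ((m' - b' : E) : WithTop E) ∈ upperBounds (Set.range f) := by
          rintro _ ⟨n, rfl⟩
          rw [hfc n, WithTop.coe_le_coe]
          have h3 : b' + f' n ≤ m' := le_sub_iff_add_le.mp (hbn n)
          exact le_sub_iff_add_le.mpr (by rwa [add_comm] at h3)
        exact WithTop.coe_le_coe.mp (ha.2 this)
      exact le_sub_iff_add_le.mp han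

lemma isLUB_finsetSum {ι : Type*} (s : Finset ι) (f : ι → ℕ → WithTop E)
    (hmono : ∀ i ∈ s, Monotone (f i)) (L : ι → WithTop E)
    (hL : ∀ i ∈ s, IsLUB (Set.range (f i)) (L i)) :
    IsLUB (Set.range fun n => ∑ i ∈ s, f i n) (∑ i ∈ s, L i) := by
  classical
  induction s using Finset.induction with
  | empty =>
    simp only [Finset.sum_empty]
    rw [Set.range_const]
    exact isLUB_singleton
  | @insert a s ha ih =>
    have h1 : IsLUB (Set.range fun n => ∑ i ∈ s, f i n) (∑ i ∈ s, L i) :=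
      ih (fun i hi => hmono i (Finset.mem_insert_of_mem hi))
        (fun i hi => hL i (Finset.mem_insert_of_mem hi))
    have h2 := isLUB_add_mono (hmono a (Finset.mem_insert_self a s))
      (fun n m hnm => Finset.sum_le_sum fun i hi =>
        hmono i (Finset.mem_insert_of_mem hi) hnm)
      (hL a (Finset.mem_insert_self a s)) h1
    simp only [Finset.sum_insert ha]
    exact h2

end lub

section arch
variable {E : Type*} [AddCommGroup E] [PartialOrder E] [IsOrderedAddMonoid E] [Module ℝ E] [PosSMulStrictMono ℝ E] [PosSMulReflectLT ℝ E]

lemma arch_le_zero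
    (hσ : ∀ a : ℕ → E, Monotone a → BddAbove (Set.range a) → ∃ s, IsLUB (Set.range a) s)
    {e u : E} (he : 0 ≤ e) (h : ∀ n : ℕ, u ≤ ((n : ℝ) + 2)⁻¹ • e) : u ≤ 0 := by
  set a : ℕ → E := fun n => -(((n : ℝ) + 2)⁻¹ • e) with ha
  have hmono : Monotone a := by
    apply monotone_nat_of_le_succ
    intro n
    rw [ha, neg_le_neg_iff]
    apply smul_le_smul_of_nonneg_right _ he
    rw [inv_le_inv₀ (by positivity) (by positivity)]
    push_cast; linarith
  have hbdd : BddAbove (Set.range a) := by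
    refine ⟨0, ?_⟩
    rintro _ ⟨n, rfl⟩
    rw [ha]
    simp only [neg_nonpos]
    positivity
  obtain ⟨s, hs⟩ := hσ a hmono hbdd
  have hs0 : s ≤ 0 := by
    apply hs.2
    rintro _ ⟨n, rfl⟩
    rw [ha]
    simp only [neg_nonpos]
    positivity
  have h0s : 0 ≤ s := by
    have hs2 : s ≤ (2 : ℝ) • s := by
      apply hs.2
      rintro _ ⟨n, rfl⟩
      have h1 : a (2 * n + 2) ≤ s := hs.1 ⟨2 * n + 2, rfl⟩
      have h2 : (2 : ℝ) • a (2 * n + 2) = a n := by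
        rw [ha]
        simp only [smul_neg, smul_smul]
        congr 2
        push_cast
        field_simp
        ring
      calc a n = (2 : ℝ) • a (2 * n + 2) := h2.symm
        _ ≤ (2 : ℝ) • s := smul_le_smul_of_nonneg_left h1 (by norm_num)
    have : (0 : E) ≤ (2 : ℝ) • s - s := sub_nonneg.mpr hs2
    have h2s : (2 : ℝ) • s - s = s := by
      rw [two_smul]; abel
    rwa [h2s] at this
  have hsu : s ≤ -u := by
    apply hs.2
    rintro _ ⟨n, rfl⟩
    rw [ha, neg_le_neg_iff]
    exact h n
  have := le_trans h0s hsu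
  exact neg_nonneg.mp this

end arch

section main
variable {X : Type*} [MeasurableSpace X]
  {E : Type*} [AddCommGroup E] [PartialOrder E] [IsOrderedAddMonoid E] [Module ℝ E] [PosSMulStrictMono ℝ E] [PosSMulReflectLT ℝ E]
  {μ : Set X → WithTop E} (hμ : IsOMeasure μ)

/-- The partial order integral over a set `A`. -/
noncomputable def pInt (μ : Set X → WithTop E) (χ : SimpleFunc X NNReal) (A : Set X) :
    WithTop E :=
  ∑ r ∈ χ.range, eSMul r (μ (⇑χ ⁻¹' {r} ∩ A))

lemma elemOInt_eq_pInt (χ : SimpleFunc X NNReal) :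
    elemOInt μ χ = pInt μ χ Set.univ := by
  unfold elemOInt pInt
  simp [Set.inter_univ]

include hμ

lemma omeas_fiber_split (χ : SimpleFunc X NNReal) (B : Set X) (hB : MeasurableSet B) :
    μ B = ∑ r ∈ χ.range, μ (⇑χ ⁻¹' {r} ∩ B) := by
  classical
  rw [← omeas_biUnion hμ χ.range (fun r => ⇑χ ⁻¹' {r} ∩ B)
    (fun r => (χ.measurableSet_fiber r).inter hB)
    (fun i _ j _ hij => Set.disjoint_left.mpr (by
      rintro x ⟨hxi, _⟩ ⟨hxj, _⟩
      exact hij (by rw [← hxi, ← hxj])))]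
  congr 1
  apply subset_antisymm
  · intro x hxB
    exact Set.mem_biUnion (Finset.mem_coe.mpr (SimpleFunc.mem_range_self χ x))
      (Set.mem_inter rfl hxB)
  · exact Set.iUnion₂_subset fun r _ => Set.inter_subset_right

lemma pInt_mono_set (χ : SimpleFunc X NNReal) {A B : Set X} (hA : MeasurableSet A)
    (hB : MeasurableSet B) (hAB : A ⊆ B) : pInt μ χ A ≤ pInt μ χ B := by
  apply Finset.sum_le_sum
  intro r _
  exact eSMul_mono_right r (omeas_mono hμ ((χ.measurableSet_fiber r).inter hA)
    ((χ.measurableSet_fiber r).inter hB) (Set.inter_subset_inter_right _ hAB))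

lemma pInt_nonneg (χ : SimpleFunc X NNReal) {A : Set X} (hA : MeasurableSet A) :
    0 ≤ pInt μ χ A :=
  Finset.sum_nonneg fun r _ =>
    eSMul_nonneg r (hμ.2.1 _ ((χ.measurableSet_fiber r).inter hA))

lemma pInt_le_pInt {χ ζ : SimpleFunc X NNReal} {A : Set X} (hA : MeasurableSet A)
    (h : ∀ x ∈ A, χ x ≤ ζ x) : pInt μ χ A ≤ pInt μ ζ A := by
  classical
  have hDmeas : ∀ r s : NNReal, MeasurableSet (⇑ζ ⁻¹' {s} ∩ (⇑χ ⁻¹' {r} ∩ A)) :=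
    fun r s => (ζ.measurableSet_fiber s).inter ((χ.measurableSet_fiber r).inter hA)
  calc pInt μ χ A
      = ∑ r ∈ χ.range, eSMul r (∑ s ∈ ζ.range, μ (⇑ζ ⁻¹' {s} ∩ (⇑χ ⁻¹' {r} ∩ A))) := by
        unfold pInt
        refine Finset.sum_congr rfl fun r _ => ?_
        rw [← omeas_fiber_split hμ ζ _ ((χ.measurableSet_fiber r).inter hA)]
    _ = ∑ r ∈ χ.range, ∑ s ∈ ζ.range, eSMul r (μ (⇑ζ ⁻¹' {s} ∩ (⇑χ ⁻¹' {r} ∩ A))) := by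
        refine Finset.sum_congr rfl fun r _ => eSMul_sum r _ _
    _ ≤ ∑ r ∈ χ.range, ∑ s ∈ ζ.range, eSMul s (μ (⇑ζ ⁻¹' {s} ∩ (⇑χ ⁻¹' {r} ∩ A))) := by
        refine Finset.sum_le_sum fun r _ => Finset.sum_le_sum fun s _ => ?_
        rcases Set.eq_empty_or_nonempty (⇑ζ ⁻¹' {s} ∩ (⇑χ ⁻¹' {r} ∩ A)) with he | hne
        · rw [he, hμ.1, eSMul_zero_right, eSMul_zero_right]
        · obtain ⟨x, hxs, hxr, hxA⟩ := hne
          have hrs : r ≤ s := by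
            have := h x hxA
            rw [Set.mem_preimage, Set.mem_singleton_iff] at hxs hxr
            rwa [hxr, hxs] at this
          exact eSMul_mono_left hrs (hμ.2.1 _ (hDmeas r s))
    _ = ∑ s ∈ ζ.range, ∑ r ∈ χ.range, eSMul s (μ (⇑ζ ⁻¹' {s} ∩ (⇑χ ⁻¹' {r} ∩ A))) :=
        Finset.sum_comm
    _ = pInt μ ζ A := by
        unfold pInt
        refine Finset.sum_congr rfl fun s _ => ?_
        rw [← eSMul_sum]
        congr 1
        have : ∀ r : NNReal, ⇑ζ ⁻¹' {s} ∩ (⇑χ ⁻¹' {r} ∩ A) = ⇑χ ⁻¹' {r} ∩ (⇑ζ ⁻¹' {s} ∩ A) :=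
          fun r => by rw [Set.inter_left_comm]
        simp_rw [this]
        rw [← omeas_fiber_split hμ χ _ ((ζ.measurableSet_fiber s).inter hA)]

lemma pInt_isLUB (χ : SimpleFunc X NNReal) (A : ℕ → Set X) (hA : Monotone A)
    (hmeas : ∀ n, MeasurableSet (A n)) :
    IsLUB (Set.range fun n => pInt μ χ (A n)) (pInt μ χ (⋃ n, A n)) := by
  have key := isLUB_finsetSum χ.range
    (fun r n => eSMul r (μ (⇑χ ⁻¹' {r} ∩ A n)))
    (fun r _ => fun n m hnm => eSMul_mono_right r (omeas_mono hμ
      ((χ.measurableSet_fiber r).inter (hmeas n))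
      ((χ.measurableSet_fiber r).inter (hmeas m))
      (Set.inter_subset_inter_right _ (hA hnm))))
    (fun r => eSMul r (μ (⇑χ ⁻¹' {r} ∩ ⋃ n, A n)))
    (fun r _ => by
      show IsLUB (Set.range fun n => eSMul r (μ (⇑χ ⁻¹' {r} ∩ A n)))
        (eSMul r (μ (⇑χ ⁻¹' {r} ∩ ⋃ n, A n)))
      rw [Set.inter_iUnion]
      exact eSMul_isLUB r (omeas_cont_below hμ _
        (fun n m hnm => Set.inter_subset_inter_right _ (hA hnm))
        (fun n => (χ.measurableSet_fiber r).inter (hmeas n))))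
  exact key

lemma elemOInt_smul (c : NNReal) (hc : c ≠ 0) (φ : SimpleFunc X NNReal) :
    elemOInt μ (c • φ) = eSMul c (elemOInt μ φ) := by
  classical
  unfold elemOInt
  have hrange : (c • φ).range = φ.range.image (c • ·) := by
    rw [SimpleFunc.smul_eq_map, SimpleFunc.range_map]
  rw [hrange, Finset.sum_image (fun x _ y _ (hxy : c • x = c • y) => mul_left_cancel₀ hc hxy), eSMul_sum]
  refine Finset.sum_congr rfl fun r _ => ?_
  have hpre : (⇑(c • φ) ⁻¹' {c • r}) = ⇑φ ⁻¹' {r} := by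
    ext x
    simp only [Set.mem_preimage, Set.mem_singleton_iff, SimpleFunc.coe_smul, Pi.smul_apply,
      smul_eq_mul]
    exact mul_right_inj' hc
  rw [hpre, smul_eq_mul, eSMul_mul]

end main

/-- Key approximation lemma: if `φ` is a nonnegative elementary function,
`(φ_n)` an increasing sequence of nonnegative elementary functions with
`φ ≤ sup_n φ_n` pointwise in `[0,∞]`, and `b` is the supremum of the order
integrals of the `φ_n` in `E̅`, then `∫ᵒ φ dμ ≤ b`. -/
theorem elemOInt_le_of_le_iSup
    {X : Type*} [MeasurableSpace X]
    {E : Type*} [AddCommGroup E] [PartialOrder E] [IsOrderedAddMonoid E] [Module ℝ E] [PosSMulStrictMono ℝ E] [PosSMulReflectLT ℝ E]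
    (hσ : ∀ a : ℕ → E, Monotone a → BddAbove (Set.range a) → ∃ s, IsLUB (Set.range a) s)
    (μ : Set X → WithTop E) (hμ : IsOMeasure μ)
    (φ : SimpleFunc X NNReal) (ψ : ℕ → SimpleFunc X NNReal)
    (hmono : ∀ x : X, Monotone fun n => ψ n x)
    (hle : ∀ x : X, (φ x : ENNReal) ≤ ⨆ n, (ψ n x : ENNReal))
    (b : WithTop E) (hb : IsLUB (Set.range fun n => elemOInt μ (ψ n)) b) :
    elemOInt μ φ ≤ b := by
  classical
  -- Step 1: for every `c < 1`, `eSMul c (∫ᵒ φ) ≤ b`.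
  have key : ∀ c : NNReal, c ≠ 0 → c < 1 → eSMul c (elemOInt μ φ) ≤ b := by
    intro c hc0 hc1
    set A : ℕ → Set X := fun n => {x | (c • φ) x ≤ ψ n x} with hA
    have hAmeas : ∀ n, MeasurableSet (A n) := by
      intro n
      have h1 : A n = ⇑((c • φ).pair (ψ n)) ⁻¹' {p : NNReal × NNReal | p.1 ≤ p.2} := by
        ext x
        simp [hA, SimpleFunc.pair_apply]
      rw [h1]
      exact SimpleFunc.measurableSet_preimage _ _
    have hAmono : Monotone A := by
      intro n m hnm x hx
      exact le_trans hx (hmono x hnm)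
    have hAunion : (⋃ n, A n) = Set.univ := by
      ext x
      simp only [Set.mem_iUnion, Set.mem_univ, iff_true]
      by_cases hφ : φ x = 0
      · refine ⟨0, ?_⟩
        show (c • φ) x ≤ ψ 0 x
        rw [SimpleFunc.coe_smul, Pi.smul_apply, smul_eq_mul, hφ, mul_zero]
        exact zero_le
      · have h1 : ((c * φ x : NNReal) : ENNReal) < (φ x : ENNReal) := by
          exact_mod_cast mul_lt_of_lt_one_left ((pos_iff_ne_zero.mpr hφ)) hc1
        have h2 := lt_of_lt_of_le h1 (hle x)
        rw [lt_iSup_iff] at h2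
        obtain ⟨n, hn⟩ := h2
        refine ⟨n, ?_⟩
        show (c • φ) x ≤ ψ n x
        rw [SimpleFunc.coe_smul, Pi.smul_apply, smul_eq_mul]
        exact_mod_cast hn.le
    have hchain : ∀ n, pInt μ (c • φ) (A n) ≤ b := by
      intro n
      calc pInt μ (c • φ) (A n) ≤ pInt μ (ψ n) (A n) :=
            pInt_le_pInt hμ (hAmeas n) (fun x hx => hx)
        _ ≤ pInt μ (ψ n) Set.univ :=
            pInt_mono_set hμ _ (hAmeas n) MeasurableSet.univ (Set.subset_univ _)
        _ = elemOInt μ (ψ n) := (elemOInt_eq_pInt _).symm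
        _ ≤ b := hb.1 ⟨n, rfl⟩
    have hlub2 := pInt_isLUB hμ (c • φ) A hAmono hAmeas
    rw [hAunion] at hlub2
    have h3 : pInt μ (c • φ) Set.univ ≤ b := by
      apply hlub2.2
      rintro _ ⟨n, rfl⟩
      exact hchain n
    rw [← elemOInt_eq_pInt] at h3
    rwa [elemOInt_smul hμ c hc0] at h3
  -- Step 2: pass to the limit `c → 1` using σ-monotone completeness.
  have hT0 : 0 ≤ elemOInt μ φ := by
    rw [elemOInt_eq_pInt]
    exact pInt_nonneg hμ φ MeasurableSet.univ
  rcases eq_or_ne (elemOInt μ φ) ⊤ with hTt | hTt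
  · have h1 := key (1 / 2) (by norm_num) (by rw [← NNReal.coe_lt_coe]; norm_num)
    rw [hTt, eSMul_top _ (by norm_num)] at h1
    rw [hTt]
    exact h1
  · obtain ⟨e, he⟩ := WithTop.ne_top_iff_exists.mp hTt
    have he0 : (0 : E) ≤ e := by
      rw [← WithTop.coe_le_coe, he]
      exact_mod_cast hT0
    induction b using WithTop.recTopCoe with
    | top => exact le_top
    | coe f =>
      have hcf : ∀ k : ℕ, (((k : ℝ) + 1) / ((k : ℝ) + 2)) • e ≤ f := by
        intro k
        set ck : NNReal := ((k : NNReal) + 1) / ((k : NNReal) + 2) with hck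
        have hck0 : ck ≠ 0 := by
          rw [hck]
          positivity
        have hck1 : ck < 1 := by
          rw [hck, div_lt_one (by positivity)]
          exact add_lt_add_right one_lt_two _
        have h1 := key ck hck0 hck1
        rw [← he, eSMul_coe _ hck0, WithTop.coe_le_coe] at h1
        have h2 : ((ck : ℝ)) = ((k : ℝ) + 1) / ((k : ℝ) + 2) := by
          rw [hck]
          push_cast
          ring
        rwa [h2] at h1
      have harch : e - f ≤ 0 := by
        apply arch_le_zero hσ he0
        intro n
        have h1 : e - f ≤ e - (((n : ℝ) + 1) / ((n : ℝ) + 2)) • e :=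
          sub_le_sub_left (hcf n) e
        have h2 : e - (((n : ℝ) + 1) / ((n : ℝ) + 2)) • e = ((n : ℝ) + 2)⁻¹ • e := by
          rw [show e - (((n : ℝ) + 1) / ((n : ℝ) + 2)) • e
              = (1 - ((n : ℝ) + 1) / ((n : ℝ) + 2)) • e by rw [sub_smul, one_smul]]
          congr 1
          field_simp
          ring
        rwa [h2] at h1
      rw [← he, WithTop.coe_le_coe]
      exact sub_nonpos.mp harch
end
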